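/- arXiv:math/0312065 — 6 statements merged into one kernel-verified Lean document; each statement's English description precedes it below -/
import Mathlib

section
/- Let K ⊂ ℝⁿ be a symmetric convex body and suppose the identity operator minimizes S ↦ trace(S) over all symmetric positive-definite operators S satisfying ⟨x, Sx⟩ ≥ 1 for all x ∈ ∂K (equivalently, the unit ball is the ellipsoid contained in K minimizing M_E). Then there exist finitely many points u₁,...,u_s ∈ ∂K with |uᵢ| = 1 (contact points of the unit ball with ∂K) and positive reals λ₁,...,λ_s such that Σᵢ λᵢ uᵢ ⊗ uᵢ = Id, i.e., Σᵢ λᵢ ⟨uᵢ, θ⟩² = |θ|² for all θ ∈ ℝⁿ. -/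
open Set Metric

lemma aux_isCompact_convexHull {W : Type*} [NormedAddCommGroup W] [NormedSpace ℝ W]
    [FiniteDimensional ℝ W] {T : Set W} (hT : IsCompact T) :
    IsCompact (convexHull ℝ T) := by
  rcases T.eq_empty_or_nonempty with rfl | ⟨t₀, ht₀⟩
  · simp only [convexHull_empty]; exact isCompact_empty
  set m := Module.finrank ℝ W + 1 with hm
  set g : (Fin m → ℝ) × (Fin m → W) → W := fun p => ∑ i, p.1 i • p.2 i with hg
  have hgc : Continuous g := by
    apply continuous_finset_sum
    intro i _
    exact ((continuous_apply i).comp continuous_fst).smul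
      ((continuous_apply i).comp continuous_snd)
  have hD : IsCompact ((stdSimplex ℝ (Fin m)) ×ˢ (Set.univ.pi fun _ : Fin m => T)) :=
    IsCompact.prod (isCompact_stdSimplex ℝ (Fin m)) (isCompact_univ_pi fun _ => hT)
  have key : convexHull ℝ T = g '' ((stdSimplex ℝ (Fin m)) ×ˢ (Set.univ.pi fun _ : Fin m => T)) := by
    apply Set.Subset.antisymm
    · intro x hx
      obtain ⟨ι, hι, z, w, hrange, haff, hpos, hsum, hcomb⟩ :=
        eq_pos_convex_span_of_mem_convexHull hx
      have hcard : Fintype.card ι ≤ Fintype.card (Fin m) := by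
        rw [Fintype.card_fin]
        exact haff.card_le_finrank_succ.trans (add_le_add_left (Submodule.finrank_le _) 1)
      obtain ⟨e⟩ := Function.Embedding.nonempty_of_card_le hcard
      classical
      set w' : Fin m → ℝ := Function.extend e w 0 with hw'
      set z' : Fin m → W := Function.extend e z (fun _ => t₀) with hz'
      have hwz : ∀ i : ι, w' (e i) = w i ∧ z' (e i) = z i := fun i =>
        ⟨e.injective.extend_apply _ _ _, e.injective.extend_apply _ _ _⟩
      have hoff : ∀ j : Fin m, (¬∃ i, e i = j) → w' j = 0 := fun j h => by
        rw [hw', Function.extend_apply' _ _ _ h]; rfl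
      have hsum' : ∀ (F : Fin m → ℝ → W → W) (hF0 : ∀ j, F j 0 (z' j) = 0),
          True := fun _ _ => trivial
      have himageR : ∀ (F : Fin m → ℝ),
          (∀ j, (¬∃ i, e i = j) → F j = 0) → ∑ j, F j = ∑ i, F (e i) := by
        intro F hF
        have h1 : ∑ j ∈ Finset.univ.image e, F j = ∑ i, F (e i) :=
          Finset.sum_image (fun i _ j _ h => e.injective h)
        rw [← h1]
        apply (Finset.sum_subset (Finset.subset_univ _) _).symm
        intro j _ hj
        apply hF
        rintro ⟨i, rfl⟩
        exact hj (Finset.mem_image_of_mem _ (Finset.mem_univ i))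
      have himageW : ∀ (F : Fin m → W),
          (∀ j, (¬∃ i, e i = j) → F j = 0) → ∑ j, F j = ∑ i, F (e i) := by
        intro F hF
        have h1 : ∑ j ∈ Finset.univ.image e, F j = ∑ i, F (e i) :=
          Finset.sum_image (fun i _ j _ h => e.injective h)
        rw [← h1]
        apply (Finset.sum_subset (Finset.subset_univ _) _).symm
        intro j _ hj
        apply hF
        rintro ⟨i, rfl⟩
        exact hj (Finset.mem_image_of_mem _ (Finset.mem_univ i))
      have hzT : ∀ j : Fin m, z' j ∈ T := by
        intro j
        rcases em (∃ i, e i = j) with ⟨i, rfl⟩ | h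
        · rw [(hwz i).2]; exact hrange ⟨i, rfl⟩
        · rw [hz', Function.extend_apply' _ _ _ h]; exact ht₀
      refine ⟨(w', z'), ⟨⟨?_, ?_⟩, ?_⟩, ?_⟩
      · intro j
        show 0 ≤ w' j
        rcases em (∃ i, e i = j) with ⟨i, rfl⟩ | h
        · rw [(hwz i).1]; exact (hpos i).le
        · rw [hoff j h]
      · show ∑ j, w' j = 1
        rw [himageR w' hoff, ← hsum]
        exact Finset.sum_congr rfl fun i _ => (hwz i).1
      · intro j _
        exact hzT j
      · show ∑ j, w' j • z' j = x
        have := himageW (fun j => w' j • z' j)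
          (fun j h => by show w' j • z' j = 0; rw [hoff j h, zero_smul])
        rw [this, ← hcomb]
        exact Finset.sum_congr rfl fun i _ => by
          show w' (e i) • z' (e i) = w i • z i
          rw [(hwz i).1, (hwz i).2]
    · rintro x ⟨⟨w, z⟩, ⟨hw, hz⟩, rfl⟩
      exact mem_convexHull_of_exists_fintype w z hw.1 hw.2 (fun i => hz i (mem_univ i)) rfl
  rw [key]
  exact hD.image hgc


section JohnAux

/-- The quadratic form of a coefficient array `H`. -/
def johnQF {n : ℕ} (H : Fin n → Fin n → ℝ) (x : EuclideanSpace ℝ (Fin n)) : ℝ :=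
  ∑ a, ∑ b, H a b * (x a * x b)

/-- The linear map attached to a coefficient array `H`. -/
noncomputable def johnLin (n : ℕ) (H : Fin n → Fin n → ℝ) :
    EuclideanSpace ℝ (Fin n) →ₗ[ℝ] EuclideanSpace ℝ (Fin n) where
  toFun x := WithLp.toLp 2 (fun a => ∑ b, H a b * x b)
  map_add' x y := by
    ext a
    show ∑ b, H a b * (x + y) b = (∑ b, H a b * x b) + ∑ b, H a b * y b
    rw [← Finset.sum_add_distrib]
    refine Finset.sum_congr rfl fun b _ => ?_
    rw [PiLp.add_apply, mul_add]
  map_smul' c x := by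
    ext a
    show ∑ b, H a b * (c • x) b = c * ∑ b, H a b * x b
    rw [Finset.mul_sum]
    refine Finset.sum_congr rfl fun b _ => ?_
    rw [PiLp.smul_apply, smul_eq_mul]
    ring

lemma johnLin_apply {n : ℕ} (H : Fin n → Fin n → ℝ) (x : EuclideanSpace ℝ (Fin n)) (a : Fin n) :
    johnLin n H x a = ∑ b, H a b * x b := rfl

lemma euclid_inner_eq {n : ℕ} (x y : EuclideanSpace ℝ (Fin n)) :
    (inner ℝ x y : ℝ) = ∑ a, x a * y a := by
  simp [PiLp.inner_apply, RCLike.inner_apply, conj_trivial, mul_comm]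

lemma euclid_norm_sq {n : ℕ} (x : EuclideanSpace ℝ (Fin n)) :
    ‖x‖ ^ 2 = ∑ a, x a * x a := by
  rw [← real_inner_self_eq_norm_sq, euclid_inner_eq]

lemma euclid_abs_coord_le {n : ℕ} (x : EuclideanSpace ℝ (Fin n)) (a : Fin n) :
    |x a| ≤ ‖x‖ := by
  have h1 : |x a| ^ 2 ≤ ‖x‖ ^ 2 := by
    rw [euclid_norm_sq, sq_abs, sq]
    exact Finset.single_le_sum (f := fun b => x b * x b)
      (fun b _ => mul_self_nonneg _) (Finset.mem_univ a)
  nlinarith [abs_nonneg (x a), norm_nonneg x]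

lemma euclid_inner_johnLin {n : ℕ} (H : Fin n → Fin n → ℝ) (x : EuclideanSpace ℝ (Fin n)) :
    (inner ℝ x (johnLin n H x) : ℝ) = johnQF H x := by
  rw [euclid_inner_eq, johnQF]
  refine Finset.sum_congr rfl fun a _ => ?_
  rw [johnLin_apply, Finset.mul_sum]
  refine Finset.sum_congr rfl fun b _ => by ring

lemma johnQF_continuous {n : ℕ} (H : Fin n → Fin n → ℝ) : Continuous (johnQF H) := by
  apply continuous_finset_sum
  intro a _
  apply continuous_finset_sum
  intro b _
  exact continuous_const.mul
    (((EuclideanSpace.proj a).continuous).mul ((EuclideanSpace.proj b).continuous))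

lemma johnQF_bound {n : ℕ} (H : Fin n → Fin n → ℝ) (x : EuclideanSpace ℝ (Fin n)) :
    |johnQF H x| ≤ (∑ a, ∑ b, |H a b|) * ‖x‖ ^ 2 := by
  calc |johnQF H x| ≤ ∑ a, ∑ b, |H a b| * (‖x‖ * ‖x‖) := by
        refine (Finset.abs_sum_le_sum_abs _ _).trans ?_
        refine Finset.sum_le_sum fun a _ => ?_
        refine (Finset.abs_sum_le_sum_abs _ _).trans ?_
        refine Finset.sum_le_sum fun b _ => ?_
        rw [abs_mul, abs_mul]
        refine mul_le_mul_of_nonneg_left ?_ (abs_nonneg _)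
        exact mul_le_mul (euclid_abs_coord_le x a) (euclid_abs_coord_le x b)
          (abs_nonneg _) (norm_nonneg _)
    _ = (∑ a, ∑ b, |H a b|) * ‖x‖ ^ 2 := by
        rw [Finset.sum_mul, sq]
        refine Finset.sum_congr rfl fun a _ => ?_
        rw [Finset.sum_mul]

lemma johnLin_trace {n : ℕ} (H : Fin n → Fin n → ℝ) :
    LinearMap.trace ℝ (EuclideanSpace ℝ (Fin n)) (johnLin n H) = ∑ a, H a a := by
  classical
  let b := (EuclideanSpace.basisFun (Fin n) ℝ).toBasis
  rw [LinearMap.trace_eq_matrix_trace ℝ b]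
  have hmat : LinearMap.toMatrix b b (johnLin n H) = Matrix.of (fun a a' => H a a') := by
    ext a a'
    rw [LinearMap.toMatrix_apply]
    have h1 : b a' = EuclideanSpace.single a' 1 := by
      show (EuclideanSpace.basisFun (Fin n) ℝ).toBasis a' = _
      rw [OrthonormalBasis.coe_toBasis]
      exact EuclideanSpace.basisFun_apply (Fin n) ℝ a'
    have h2 : ∀ y : EuclideanSpace ℝ (Fin n), b.repr y a = y a := fun y => by
      show (EuclideanSpace.basisFun (Fin n) ℝ).toBasis.repr y a = y a
      rw [OrthonormalBasis.coe_toBasis_repr_apply]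
      rfl
    rw [h1, h2, johnLin_apply]
    simp [EuclideanSpace.single_apply]
  rw [hmat]
  simp [Matrix.trace, Matrix.diag]

end JohnAux

section Perturb

lemma john_perturb {n : ℕ} (hn : 0 < n) (K : Set (EuclideanSpace ℝ (Fin n)))
    (hKcomp : IsCompact K)
    (hball : closedBall (0 : EuclideanSpace ℝ (Fin n)) 1 ⊆ K)
    (hIdadm : ∀ x ∈ frontier K, 1 ≤ (inner ℝ x x : ℝ))
    (hmin : ∀ S : EuclideanSpace ℝ (Fin n) →ₗ[ℝ] EuclideanSpace ℝ (Fin n),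
      LinearMap.IsSymmetric S → (∀ x : EuclideanSpace ℝ (Fin n), x ≠ 0 → 0 < (inner ℝ x (S x) : ℝ)) →
      (∀ x ∈ frontier K, 1 ≤ (inner ℝ x (S x) : ℝ)) →
      LinearMap.trace ℝ (EuclideanSpace ℝ (Fin n)) LinearMap.id
        ≤ LinearMap.trace ℝ (EuclideanSpace ℝ (Fin n)) S)
    (H : Fin n → Fin n → ℝ) (hHsym : ∀ a b, H a b = H b a)
    (hHq : ∀ u ∈ frontier K, ‖u‖ = 1 → 0 < johnQF H u)
    (hHtr : ∑ a, H a a < 0) : False := by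
  classical
  -- norm-squared form of admissibility of the identity
  have hfr1 : ∀ x ∈ frontier K, 1 ≤ ‖x‖ ^ 2 := by
    intro x hx
    have := hIdadm x hx
    rwa [real_inner_self_eq_norm_sq] at this
  -- frontier K is compact
  have hfrcomp : IsCompact (frontier K) :=
    hKcomp.of_isClosed_subset isClosed_frontier hKcomp.isClosed.frontier_subset
  -- bound on K
  obtain ⟨R, hR⟩ := hKcomp.isBounded.subset_closedBall 0
  have hR0 : 0 ≤ R := by
    have h0K : (0 : EuclideanSpace ℝ (Fin n)) ∈ K := hball (mem_closedBall_self zero_le_one)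
    simpa using hR h0K
  -- bound on the quadratic form
  set M : ℝ := ∑ a, ∑ b, |H a b| with hM
  have hM0 : 0 ≤ M :=
    Finset.sum_nonneg fun a _ => Finset.sum_nonneg fun b _ => abs_nonneg _
  -- the bad set
  set F : Set (EuclideanSpace ℝ (Fin n)) := {x ∈ frontier K | johnQF H x ≤ 0} with hF
  have hFcomp : IsCompact F := by
    have hFeq : F = frontier K ∩ (johnQF H) ⁻¹' (Iic (0:ℝ)) := rfl
    rw [hFeq]
    exact hfrcomp.inter_right (IsClosed.preimage (johnQF_continuous H) isClosed_Iic)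
  -- a margin η on F
  obtain ⟨η, hη0, hηF⟩ : ∃ η : ℝ, 0 < η ∧ ∀ x ∈ F, 1 + η ≤ ‖x‖ ^ 2 := by
    rcases F.eq_empty_or_nonempty with hFe | hFne
    · exact ⟨1, one_pos, by simp [hFe]⟩
    · obtain ⟨x₀, hx₀F, hx₀min⟩ := hFcomp.exists_isMinOn hFne continuous_norm.continuousOn
      have hx₀fr : x₀ ∈ frontier K := hx₀F.1
      have h1 : 1 ≤ ‖x₀‖ ^ 2 := hfr1 x₀ hx₀fr
      have hne : ‖x₀‖ ≠ 1 := by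
        intro h
        exact absurd hx₀F.2 (not_le.mpr (hHq x₀ hx₀fr h))
      have h1' : 1 < ‖x₀‖ ^ 2 := by
        rcases lt_or_eq_of_le h1 with h | h
        · exact h
        · exfalso; apply hne
          have : ‖x₀‖ ^ 2 = 1 ^ 2 := by rw [← h]; ring
          have hnn : (0:ℝ) ≤ ‖x₀‖ := norm_nonneg _
          nlinarith
      refine ⟨‖x₀‖ ^ 2 - 1, by linarith, fun x hx => ?_⟩
      have := hx₀min hx
      simp only at this
      have hx0 : ‖x₀‖ ≤ ‖x‖ := this
      have : ‖x₀‖ ^ 2 ≤ ‖x‖ ^ 2 := by nlinarith [norm_nonneg x₀, norm_nonneg x]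
      linarith
  -- choose ε
  set ε : ℝ := min (η / (M * R ^ 2 + 1)) (1 / (2 * (M + 1))) with hε
  have hMR0 : 0 ≤ M * R ^ 2 := mul_nonneg hM0 (sq_nonneg R)
  have hε0 : 0 < ε := by
    apply lt_min
    · exact div_pos hη0 (by linarith)
    · positivity
  have hε1 : ε * (M * R ^ 2) ≤ η := by
    have h1 : ε ≤ η / (M * R ^ 2 + 1) := min_le_left _ _
    have h2 : ε * (M * R ^ 2) ≤ η / (M * R ^ 2 + 1) * (M * R ^ 2) :=
      mul_le_mul_of_nonneg_right h1 hMR0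
    have h3 : η / (M * R ^ 2 + 1) * (M * R ^ 2) ≤ η := by
      rw [div_mul_eq_mul_div, div_le_iff₀ (by linarith)]
      nlinarith
    linarith
  have hε2 : ε * M < 1 := by
    have h1 : ε ≤ 1 / (2 * (M + 1)) := min_le_right _ _
    have h2 : ε * M ≤ 1 / (2 * (M + 1)) * M := mul_le_mul_of_nonneg_right h1 hM0
    have h3 : 1 / (2 * (M + 1)) * M < 1 := by
      rw [div_mul_eq_mul_div, div_lt_iff₀ (by linarith)]
      nlinarith
    linarith
  -- the competitor
  set S : EuclideanSpace ℝ (Fin n) →ₗ[ℝ] EuclideanSpace ℝ (Fin n) :=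
    LinearMap.id + ε • johnLin n H with hS
  have hSapply : ∀ x : EuclideanSpace ℝ (Fin n),
      (inner ℝ x (S x) : ℝ) = ‖x‖ ^ 2 + ε * johnQF H x := by
    intro x
    rw [hS]
    simp only [LinearMap.add_apply, LinearMap.smul_apply, LinearMap.id_apply]
    rw [inner_add_right, real_inner_smul_right, real_inner_self_eq_norm_sq,
      euclid_inner_johnLin]
  -- symmetry
  have hSsym : LinearMap.IsSymmetric S := by
    intro x y
    rw [hS]
    simp only [LinearMap.add_apply, LinearMap.smul_apply, LinearMap.id_apply]
    rw [inner_add_left, inner_add_right, real_inner_smul_left, real_inner_smul_right]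
    have key : (inner ℝ (johnLin n H x) y : ℝ) = (inner ℝ x (johnLin n H y) : ℝ) := by
      rw [real_inner_comm, euclid_inner_eq, euclid_inner_eq]
      calc ∑ a, y a * johnLin n H x a
          = ∑ a, ∑ b, H a b * x b * y a := by
            refine Finset.sum_congr rfl fun a _ => ?_
            rw [johnLin_apply, Finset.mul_sum]
            exact Finset.sum_congr rfl fun b _ => by ring
        _ = ∑ b, ∑ a, H a b * x b * y a := Finset.sum_comm
        _ = ∑ a, x a * johnLin n H y a := by
            refine Finset.sum_congr rfl fun a _ => ?_
            rw [johnLin_apply, Finset.mul_sum]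
            refine Finset.sum_congr rfl fun b _ => ?_
            rw [hHsym b a]
            ring
    rw [key]
  -- positivity
  have hSpos : ∀ x : EuclideanSpace ℝ (Fin n), x ≠ 0 → 0 < (inner ℝ x (S x) : ℝ) := by
    intro x hx
    rw [hSapply]
    have hb := johnQF_bound H x
    have hxn : 0 < ‖x‖ ^ 2 := by
      have : 0 < ‖x‖ := norm_pos_iff.mpr hx
      positivity
    have h1 : -(M * ‖x‖ ^ 2) ≤ johnQF H x := by
      have := abs_le.mp (le_refl |johnQF H x|)
      have h2 : |johnQF H x| ≤ M * ‖x‖ ^ 2 := hb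
      have := neg_abs_le (johnQF H x)
      linarith
    have h3 : ε * -(M * ‖x‖ ^ 2) ≤ ε * johnQF H x :=
      mul_le_mul_of_nonneg_left h1 hε0.le
    nlinarith
  -- admissibility
  have hSadm : ∀ x ∈ frontier K, 1 ≤ (inner ℝ x (S x) : ℝ) := by
    intro x hx
    rw [hSapply]
    rcases le_or_gt 0 (johnQF H x) with hq | hq
    · have := hfr1 x hx
      nlinarith
    · have hxF : x ∈ F := ⟨hx, hq.le⟩
      have h1 : 1 + η ≤ ‖x‖ ^ 2 := hηF x hxF
      have hxR : ‖x‖ ≤ R := by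
        have hxK : x ∈ K := hKcomp.isClosed.frontier_subset hx
        simpa using hR hxK
      have hb := johnQF_bound H x
      have hx2R : ‖x‖ ^ 2 ≤ R ^ 2 := by nlinarith [norm_nonneg x]
      have h2 : -(M * R ^ 2) ≤ johnQF H x := by
        have := neg_abs_le (johnQF H x)
        have h3 : M * ‖x‖ ^ 2 ≤ M * R ^ 2 := mul_le_mul_of_nonneg_left hx2R hM0
        linarith
      have h4 : ε * -(M * R ^ 2) ≤ ε * johnQF H x := mul_le_mul_of_nonneg_left h2 hε0.le
      nlinarith
  -- the trace contradiction
  have htrS := hmin S hSsym hSpos hSadm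
  have htr1 : LinearMap.trace ℝ (EuclideanSpace ℝ (Fin n)) S
      = LinearMap.trace ℝ (EuclideanSpace ℝ (Fin n)) LinearMap.id + ε * ∑ a, H a a := by
    rw [hS, map_add, map_smul, johnLin_trace, smul_eq_mul]
  rw [htr1] at htrS
  nlinarith

end Perturb

section Separation

lemma john_exists_H {n : ℕ} (hn : 0 < n) (C : Set (EuclideanSpace ℝ (Fin n)))
    (hCcomp : IsCompact C) (hCnorm : ∀ u ∈ C, ‖u‖ = 1)
    (hp : (fun a b => if a = b then (n:ℝ)⁻¹ else 0) ∉ convexHull ℝ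
      ((fun (u : EuclideanSpace ℝ (Fin n)) => (fun a b => u a * u b : Fin n → Fin n → ℝ)) '' C)) :
    ∃ H : Fin n → Fin n → ℝ, (∀ a b, H a b = H b a) ∧ (∀ u ∈ C, 0 < johnQF H u) ∧
      ∑ a, H a a < 0 := by
  classical
  set φ : EuclideanSpace ℝ (Fin n) → (Fin n → Fin n → ℝ) :=
    fun u => (fun a b => u a * u b) with hφ
  set T : Set (Fin n → Fin n → ℝ) := φ '' C with hT
  set p : Fin n → Fin n → ℝ := fun a b => if a = b then (n:ℝ)⁻¹ else 0 with hpdef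
  rcases C.eq_empty_or_nonempty with hCe | hCne
  · refine ⟨fun a b => if a = b then -1 else 0, ?_, ?_, ?_⟩
    · intro a b
      show (if a = b then (-1:ℝ) else 0) = (if b = a then (-1:ℝ) else 0)
      by_cases h : a = b
      · subst h; simp
      · rw [if_neg h, if_neg (Ne.symm h)]
    · intro u hu; rw [hCe] at hu; exact absurd hu (notMem_empty u)
    · show (∑ a : Fin n, if a = a then (-1:ℝ) else 0) < 0
      have h1 : (∑ a : Fin n, if a = a then (-1:ℝ) else 0) = -(n:ℝ) := by simp
      rw [h1]
      have : (0:ℝ) < n := by exact_mod_cast hn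
      linarith
  · have hφc : Continuous φ := by
      apply continuous_pi
      intro a
      apply continuous_pi
      intro b
      exact ((EuclideanSpace.proj a).continuous).mul ((EuclideanSpace.proj b).continuous)
    have hTcomp : IsCompact T := hCcomp.image hφc
    obtain ⟨f, c, hfT, hfp⟩ := geometric_hahn_banach_closed_point
      (convex_convexHull ℝ T) (aux_isCompact_convexHull hTcomp).isClosed hp
    -- expand f in the standard basis
    set e : Fin n → Fin n → (Fin n → Fin n → ℝ) :=
      fun a b => (fun a' b' => if a' = a ∧ b' = b then 1 else 0) with he
    set H₀ : Fin n → Fin n → ℝ := fun a b => f (e a b) with hH₀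
    have hf : ∀ A : Fin n → Fin n → ℝ, f A = ∑ a, ∑ b, A a b * H₀ a b := by
      intro A
      have hA : A = ∑ a, ∑ b, A a b • e a b := by
        funext a' b'
        simp only [Finset.sum_apply, Pi.smul_apply, smul_eq_mul, he,
          mul_ite, mul_one, mul_zero, ite_and]
        rw [Finset.sum_comm]
        simp [Finset.sum_ite_eq]
      conv_lhs => rw [hA]
      rw [map_sum]
      refine Finset.sum_congr rfl fun a _ => ?_
      rw [map_sum]
      refine Finset.sum_congr rfl fun b _ => ?_
      rw [map_smul, smul_eq_mul, hH₀]
    -- the separating matrix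
    refine ⟨fun a b => (if a = b then c else 0) - (H₀ a b + H₀ b a) / 2, ?_, ?_, ?_⟩
    · intro a b
      show ((if a = b then c else 0) - (H₀ a b + H₀ b a) / 2)
          = ((if b = a then c else 0) - (H₀ b a + H₀ a b) / 2)
      by_cases h : a = b
      · subst h; ring
      · rw [if_neg h, if_neg (Ne.symm h)]; ring
    · intro u huC
      have hu1 : ∑ a, u a * u a = 1 := by
        rw [← euclid_norm_sq, hCnorm u huC, one_pow]
      have hfu : f (φ u) < c := hfT (φ u) (subset_convexHull ℝ T ⟨u, huC, rfl⟩)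
      have hqu : johnQF (fun a b => (if a = b then c else 0) - (H₀ a b + H₀ b a) / 2) u
          = c - f (φ u) := by
        rw [johnQF, hf (φ u)]
        have hsplit : ∀ a b : Fin n,
            ((if a = b then c else 0) - (H₀ a b + H₀ b a) / 2) * (u a * u b)
            = (if a = b then c * (u a * u b) else 0)
              - (H₀ a b * (u a * u b) / 2 + H₀ b a * (u a * u b) / 2) := by
          intro a b
          by_cases h : a = b
          · rw [if_pos h, if_pos h]; ring
          · rw [if_neg h, if_neg h]; ring
        calc ∑ a, ∑ b, ((if a = b then c else 0) - (H₀ a b + H₀ b a) / 2) * (u a * u b)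
            = ∑ a, ∑ b, ((if a = b then c * (u a * u b) else 0)
              - (H₀ a b * (u a * u b) / 2 + H₀ b a * (u a * u b) / 2)) := by
              exact Finset.sum_congr rfl fun a _ => Finset.sum_congr rfl fun b _ => hsplit a b
          _ = (∑ a, ∑ b, (if a = b then c * (u a * u b) else 0))
              - ((∑ a, ∑ b, H₀ a b * (u a * u b) / 2)
                + ∑ a, ∑ b, H₀ b a * (u a * u b) / 2) := by
              rw [← Finset.sum_add_distrib, ← Finset.sum_sub_distrib]
              exact Finset.sum_congr rfl fun a _ => by
                rw [← Finset.sum_add_distrib, ← Finset.sum_sub_distrib]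
          _ = c - ∑ a, ∑ b, φ u a b * H₀ a b := by
              have e1 : (∑ a, ∑ b, (if a = b then c * (u a * u b) else 0)) = c := by
                have : ∀ a : Fin n, (∑ b, if a = b then c * (u a * u b) else 0)
                    = c * (u a * u a) := fun a => by
                  rw [Finset.sum_ite_eq]; simp
                rw [Finset.sum_congr rfl fun a _ => this a, ← Finset.mul_sum, hu1, mul_one]
              have e2 : (∑ a, ∑ b, H₀ b a * (u a * u b) / 2)
                  = ∑ a, ∑ b, H₀ a b * (u a * u b) / 2 := by
                rw [Finset.sum_comm]
                exact Finset.sum_congr rfl fun a _ => Finset.sum_congr rfl fun b _ => by ring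
              have e3 : (∑ a, ∑ b, φ u a b * H₀ a b)
                  = ∑ a, ∑ b, H₀ a b * (u a * u b) :=
                Finset.sum_congr rfl fun a _ => Finset.sum_congr rfl fun b _ => by
                  show u a * u b * H₀ a b = H₀ a b * (u a * u b); ring
              have e5 : f (φ u) = ∑ a, ∑ b, H₀ a b * (u a * u b) := by
                rw [hf (φ u)]; exact e3
              have e6 : ((∑ a, ∑ b, H₀ a b * (u a * u b) / 2)
                  + ∑ a, ∑ b, H₀ a b * (u a * u b) / 2)
                  = ∑ a, ∑ b, H₀ a b * (u a * u b) := by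
                rw [← Finset.sum_add_distrib]
                refine Finset.sum_congr rfl fun a _ => ?_
                rw [← Finset.sum_add_distrib]
                exact Finset.sum_congr rfl fun b _ => by ring
              linarith [e1, e2, e3, e5, e6]
      rw [hqu]; linarith
    · have hfpval : f p = (n:ℝ)⁻¹ * ∑ a, H₀ a a := by
        rw [hf p]
        have hterm : ∀ a b : Fin n, p a b * H₀ a b
            = if a = b then (n:ℝ)⁻¹ * H₀ a b else 0 := by
          intro a b
          show (if a = b then (n:ℝ)⁻¹ else 0) * H₀ a b = _
          by_cases h : a = b
          · rw [if_pos h, if_pos h]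
          · rw [if_neg h, if_neg h, zero_mul]
        rw [Finset.sum_congr rfl fun a _ => Finset.sum_congr rfl fun b _ => hterm a b]
        rw [Finset.mul_sum]
        refine Finset.sum_congr rfl fun a _ => ?_
        rw [Finset.sum_ite_eq]
        simp
      have htr : ∑ a, ((if a = a then c else 0) - (H₀ a a + H₀ a a) / 2)
          = n * c - ∑ a, H₀ a a := by
        have : ∀ a : Fin n, ((if a = a then c else 0) - (H₀ a a + H₀ a a) / 2)
            = c - H₀ a a := fun a => by rw [if_pos rfl]; ring
        rw [Finset.sum_congr rfl fun a _ => this a, Finset.sum_sub_distrib]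
        simp [mul_comm]
      rw [htr]
      have hn' : (0:ℝ) < n := by exact_mod_cast hn
      have h6 : (n:ℝ) * c < (n:ℝ) * f p := mul_lt_mul_of_pos_left hfp hn'
      have h5 : (n:ℝ) * f p = ∑ a, H₀ a a := by
        rw [hfpval, ← mul_assoc, mul_inv_cancel₀ (ne_of_gt hn'), one_mul]
      linarith

end Separation

open MeasureTheory Metric

/-- John-type decomposition: if `K ⊂ ℝⁿ` is a compact symmetric convex body containing the
closed unit ball, and the identity minimizes `trace(S)` over all symmetric positive-definite
operators `S` with `⟨x, Sx⟩ ≥ 1` for all `x ∈ ∂K`, then there are contact points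
`u₁, …, u_s ∈ ∂K` of norm one and weights `λᵢ > 0` with `Σᵢ λᵢ ⟨uᵢ, θ⟩² = ‖θ‖²` for all `θ`. -/
theorem john_decomposition_of_min_trace
    (n : ℕ) (K : Set (EuclideanSpace ℝ (Fin n)))
    (hKconv : Convex ℝ K) (hKcomp : IsCompact K) (hKsymm : K = -K)
    (hKint : (0 : EuclideanSpace ℝ (Fin n)) ∈ interior K)
    (hball : closedBall (0 : EuclideanSpace ℝ (Fin n)) 1 ⊆ K)
    (hIdadm : ∀ x ∈ frontier K, 1 ≤ (inner ℝ x x : ℝ))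
    (hmin : ∀ S : EuclideanSpace ℝ (Fin n) →ₗ[ℝ] EuclideanSpace ℝ (Fin n),
      LinearMap.IsSymmetric S → (∀ x : EuclideanSpace ℝ (Fin n), x ≠ 0 → 0 < (inner ℝ x (S x) : ℝ)) →
      (∀ x ∈ frontier K, 1 ≤ (inner ℝ x (S x) : ℝ)) →
      LinearMap.trace ℝ (EuclideanSpace ℝ (Fin n)) LinearMap.id
        ≤ LinearMap.trace ℝ (EuclideanSpace ℝ (Fin n)) S) :
    ∃ (s : ℕ) (u : Fin s → EuclideanSpace ℝ (Fin n)) (l : Fin s → ℝ),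
      (∀ i, u i ∈ frontier K) ∧ (∀ i, ‖u i‖ = 1) ∧ (∀ i, 0 < l i) ∧
      (∀ θ : EuclideanSpace ℝ (Fin n),
        ∑ i, l i * (inner ℝ (u i) θ : ℝ) ^ 2 = ‖θ‖ ^ 2) := by
  classical
  rcases Nat.eq_zero_or_pos n with hn0 | hn
  · subst hn0
    refine ⟨0, fun i => i.elim0, fun i => i.elim0, fun i => i.elim0, fun i => i.elim0,
      fun i => i.elim0, ?_⟩
    intro θ
    have hθ : θ = 0 := Subsingleton.elim θ 0
    simp [hθ]
  · set C : Set (EuclideanSpace ℝ (Fin n)) :=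
      frontier K ∩ sphere (0 : EuclideanSpace ℝ (Fin n)) 1 with hC
    have hfrcomp : IsCompact (frontier K) :=
      hKcomp.of_isClosed_subset isClosed_frontier hKcomp.isClosed.frontier_subset
    have hCcomp : IsCompact C := hfrcomp.inter_right isClosed_sphere
    have hCnorm : ∀ u ∈ C, ‖u‖ = 1 := fun u hu => mem_sphere_zero_iff_norm.mp hu.2
    have hpT : (fun a b => if a = b then (n:ℝ)⁻¹ else 0) ∈ convexHull ℝ
        ((fun (u : EuclideanSpace ℝ (Fin n)) =>
          (fun a b => u a * u b : Fin n → Fin n → ℝ)) '' C) := by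
      by_contra hp
      obtain ⟨H, hHsym, hHq, hHtr⟩ := john_exists_H hn C hCcomp hCnorm hp
      exact john_perturb hn K hKcomp hball hIdadm hmin H hHsym
        (fun u hu h1 => hHq u ⟨hu, mem_sphere_zero_iff_norm.mpr h1⟩) hHtr
    rw [mem_convexHull_iff_exists_fintype] at hpT
    obtain ⟨ι, hι, w, z, hw0, hw1, hzT, hsum⟩ := hpT
    have hselect : ∀ i : ι, ∃ vv : EuclideanSpace ℝ (Fin n), vv ∈ C ∧
        (fun a b => vv a * vv b : Fin n → Fin n → ℝ) = z i := by
      intro i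
      obtain ⟨vv, hvvC, hvvz⟩ := hzT i
      exact ⟨vv, hvvC, hvvz⟩
    choose v hvC hvz using hselect
    -- the matrix identity
    have hab : ∀ a b : Fin n, (∑ i, w i * (v i a * v i b))
        = (if a = b then (n:ℝ)⁻¹ else 0) := by
      intro a b
      have h1 := congrFun (congrFun hsum a) b
      have h2 : (∑ i, w i • z i) a b = ∑ i, w i * (v i a * v i b) := by
        rw [Finset.sum_apply, Finset.sum_apply]
        refine Finset.sum_congr rfl fun i _ => ?_
        have h3 : z i a b = v i a * v i b := by
          rw [← hvz i]
        simp [h3]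
      rw [← h2, h1]
    set J := {i : ι // w i ≠ 0} with hJ
    set s := Fintype.card J with hs
    set eqv : J ≃ Fin s := Fintype.equivFin J with heqv
    refine ⟨s, fun j => v ((eqv.symm j : J) : ι), fun j => (n:ℝ) * w ((eqv.symm j : J) : ι),
      ?_, ?_, ?_, ?_⟩
    · intro j; exact (hvC _).1
    · intro j; exact hCnorm _ (hvC _)
    · intro j
      have h0 : 0 ≤ w ((eqv.symm j : J) : ι) := hw0 _
      have hne : w ((eqv.symm j : J) : ι) ≠ 0 := (eqv.symm j).2
      have : (0:ℝ) < n := by exact_mod_cast hn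
      exact mul_pos this (lt_of_le_of_ne h0 (Ne.symm hne))
    · intro θ
      set G : ι → ℝ := fun i => (n:ℝ) * w i * (inner ℝ (v i) θ : ℝ) ^ 2 with hG
      have step1 : ∑ j : Fin s, (n:ℝ) * w ((eqv.symm j : J) : ι)
          * (inner ℝ (v ((eqv.symm j : J) : ι)) θ : ℝ) ^ 2 = ∑ i : J, G (i : ι) :=
        Equiv.sum_comp eqv.symm (fun i : J => G (i : ι))
      have step2 : ∑ i : J, G (i : ι) = ∑ i : ι, G i := by
        have h1 : ∑ x ∈ Finset.univ.filter (fun i : ι => w i ≠ 0), G x = ∑ i : J, G (i : ι) :=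
          Finset.sum_subtype _ (fun x => by simp) G
        rw [← h1]
        refine Finset.sum_filter_of_ne ?_
        intro x _ hx hw
        apply hx
        rw [hG]
        simp [hw]
      have key : ∑ i : ι, w i * (inner ℝ (v i) θ : ℝ) ^ 2 = (n:ℝ)⁻¹ * ‖θ‖ ^ 2 := by
        have e1 : ∀ i : ι, w i * (inner ℝ (v i) θ : ℝ) ^ 2
            = ∑ a, ∑ b, (θ a * θ b) * (w i * (v i a * v i b)) := by
          intro i
          rw [euclid_inner_eq, sq, Finset.sum_mul_sum, Finset.mul_sum]
          refine Finset.sum_congr rfl fun a _ => ?_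
          rw [Finset.mul_sum]
          exact Finset.sum_congr rfl fun b _ => by ring
        rw [Finset.sum_congr rfl fun i _ => e1 i]
        rw [Finset.sum_comm]
        have e2 : ∀ a : Fin n, (∑ i : ι, ∑ b, (θ a * θ b) * (w i * (v i a * v i b)))
            = ∑ b, (θ a * θ b) * (if a = b then (n:ℝ)⁻¹ else 0) := by
          intro a
          rw [Finset.sum_comm]
          refine Finset.sum_congr rfl fun b _ => ?_
          rw [← hab a b, Finset.mul_sum]
        rw [Finset.sum_congr rfl fun a _ => e2 a]
        have e3 : ∀ a : Fin n, (∑ b, (θ a * θ b) * (if a = b then (n:ℝ)⁻¹ else 0))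
            = θ a * θ a * (n:ℝ)⁻¹ := by
          intro a
          rw [Finset.sum_eq_single a]
          · rw [if_pos rfl]
          · intro b _ hb
            rw [if_neg (Ne.symm hb), mul_zero]
          · intro h; exact absurd (Finset.mem_univ a) h
        rw [Finset.sum_congr rfl fun a _ => e3 a]
        rw [euclid_norm_sq, Finset.mul_sum]
        exact Finset.sum_congr rfl fun a _ => by ring
      rw [step1, step2]
      have e4 : ∑ i : ι, G i = (n:ℝ) * ∑ i : ι, w i * (inner ℝ (v i) θ : ℝ) ^ 2 := by
        rw [Finset.mul_sum]
        exact Finset.sum_congr rfl fun i _ => by rw [hG]; ring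
      rw [e4, key]
      have hn' : (n:ℝ) ≠ 0 := by
        have : (0:ℝ) < n := by exact_mod_cast hn
        exact ne_of_gt this
      field_simp
end

section
/- Let K ⊂ ℝⁿ be a symmetric convex body, F = {x : ⟨x,Tx⟩ ≤ 1} ⊆ K an ellipsoid (T symmetric positive definite), and ν a finite measure supported on ∂K ∩ ∂F with ∫ x ⊗ x dν(x) = Id. Then for every symmetric positive definite operator S with ⟨x, Sx⟩ ≥ 1 for all x ∈ ∂K, we have trace(S) ≥ trace(T). In particular, F minimizes M among all ellipsoids contained in K. -/
open MeasureTheory Metric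

/-- Sufficiency of an isotropic measure on contact points: if `F = {x : ⟨x,Tx⟩ ≤ 1} ⊆ K`
with `T` symmetric positive definite, and `ν` is a finite measure supported on `∂K ∩ ∂F`
with `∫ ⟨x,θ⟩² dν(x) = ‖θ‖²` for all `θ`, then every symmetric positive definite `S` with
`⟨x, Sx⟩ ≥ 1` on `∂K` satisfies `trace(S) ≥ trace(T)`. -/
theorem isotropic_measure_implies_min_trace
    (n : ℕ) (K : Set (EuclideanSpace ℝ (Fin n)))
    (hKconv : Convex ℝ K) (hKcomp : IsCompact K) (hKsymm : K = -K)
    (hKint : (0 : EuclideanSpace ℝ (Fin n)) ∈ interior K)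
    (T : EuclideanSpace ℝ (Fin n) →ₗ[ℝ] EuclideanSpace ℝ (Fin n))
    (hTsymm : LinearMap.IsSymmetric T)
    (hTpos : ∀ x : EuclideanSpace ℝ (Fin n), x ≠ 0 → 0 < (inner ℝ x (T x) : ℝ))
    (F : Set (EuclideanSpace ℝ (Fin n)))
    (hF : F = {x | (inner ℝ x (T x) : ℝ) ≤ 1}) (hFK : F ⊆ K)
    (ν : Measure (EuclideanSpace ℝ (Fin n))) [IsFiniteMeasure ν]
    (hsupp : ν (frontier K ∩ frontier F)ᶜ = 0)
    (hiso : ∀ θ : EuclideanSpace ℝ (Fin n),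
      ∫ x, (inner ℝ x θ : ℝ) ^ 2 ∂ν = ‖θ‖ ^ 2)
    (S : EuclideanSpace ℝ (Fin n) →ₗ[ℝ] EuclideanSpace ℝ (Fin n))
    (hSsymm : LinearMap.IsSymmetric S)
    (hSpos : ∀ x : EuclideanSpace ℝ (Fin n), x ≠ 0 → 0 < (inner ℝ x (S x) : ℝ))
    (hSadm : ∀ x ∈ frontier K, 1 ≤ (inner ℝ x (S x) : ℝ)) :
    LinearMap.trace ℝ (EuclideanSpace ℝ (Fin n)) T
      ≤ LinearMap.trace ℝ (EuclideanSpace ℝ (Fin n)) S := by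
  classical
  have hn : Module.finrank ℝ (EuclideanSpace ℝ (Fin n)) = n := finrank_euclideanSpace_fin
  have hKcl : IsClosed K := hKcomp.isClosed
  have hae : ∀ᵐ x ∂ν, x ∈ frontier K ∩ frontier F := by
    rw [ae_iff]
    exact hsupp
  have hint : ∀ f : EuclideanSpace ℝ (Fin n) → ℝ, Continuous f → Integrable f ν := by
    intro f hf
    obtain ⟨C, hC⟩ := hKcomp.exists_bound_of_continuousOn hf.continuousOn
    refine (integrable_const C).mono' hf.aestronglyMeasurable ?_
    filter_upwards [hae] with x hx
    exact hC x (hKcl.frontier_subset hx.1)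
  have key : ∀ (A : EuclideanSpace ℝ (Fin n) →ₗ[ℝ] EuclideanSpace ℝ (Fin n)),
      A.IsSymmetric →
      ∫ x, (inner ℝ x (A x) : ℝ) ∂ν = LinearMap.trace ℝ (EuclideanSpace ℝ (Fin n)) A := by
    intro A hA
    set b := hA.eigenvectorBasis hn with hb
    set lam := hA.eigenvalues hn with hlam
    have hAb : ∀ i, A (b i) = lam i • b i := fun i => hA.apply_eigenvectorBasis hn i
    have hdecomp : ∀ x, (inner ℝ x (A x) : ℝ) = ∑ i, lam i * (inner ℝ x (b i) : ℝ) ^ 2 := by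
      intro x
      calc (inner ℝ x (A x) : ℝ) = ∑ i, (inner ℝ x (b i) : ℝ) * (inner ℝ (b i) (A x) : ℝ) :=
            (b.sum_inner_mul_inner x (A x)).symm
        _ = ∑ i, lam i * (inner ℝ x (b i) : ℝ) ^ 2 := by
            refine Finset.sum_congr rfl fun i _ => ?_
            rw [← hA (b i) x, hAb i, real_inner_smul_left, real_inner_comm (b i) x]
            ring
    have hIb : ∀ i : Fin n, Integrable (fun x => (inner ℝ x (b i) : ℝ) ^ 2) ν := fun i =>
      hint _ ((continuous_id.inner continuous_const).pow 2)
    have htr : LinearMap.trace ℝ (EuclideanSpace ℝ (Fin n)) A = ∑ i, lam i := by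
      rw [LinearMap.trace_eq_matrix_trace ℝ b.toBasis, Matrix.trace]
      refine Finset.sum_congr rfl fun i _ => ?_
      rw [Matrix.diag_apply, LinearMap.toMatrix_apply, OrthonormalBasis.coe_toBasis, hAb,
        _root_.map_smul]
      simp [b.toBasis.repr_self]
    calc ∫ x, (inner ℝ x (A x) : ℝ) ∂ν
        = ∫ x, ∑ i, lam i * (inner ℝ x (b i) : ℝ) ^ 2 ∂ν := by
          exact integral_congr_ae (Filter.Eventually.of_forall hdecomp)
      _ = ∑ i, ∫ x, lam i * (inner ℝ x (b i) : ℝ) ^ 2 ∂ν := by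
          exact integral_finset_sum _ fun i _ => (hIb i).const_mul _
      _ = ∑ i, lam i * ∫ x, (inner ℝ x (b i) : ℝ) ^ 2 ∂ν := by
          simp_rw [integral_const_mul]
      _ = ∑ i, lam i := by
          refine Finset.sum_congr rfl fun i _ => ?_
          rw [hiso (b i), b.orthonormal.1 i]
          simp
      _ = LinearMap.trace ℝ (EuclideanSpace ℝ (Fin n)) A := htr.symm
  have contT : Continuous fun x : EuclideanSpace ℝ (Fin n) => (inner ℝ x (T x) : ℝ) :=
    continuous_id.inner T.continuous_of_finiteDimensional
  have contS : Continuous fun x : EuclideanSpace ℝ (Fin n) => (inner ℝ x (S x) : ℝ) :=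
    continuous_id.inner S.continuous_of_finiteDimensional
  rw [← key T hTsymm, ← key S hSsymm]
  refine integral_mono_ae (hint _ contT) (hint _ contS) ?_
  filter_upwards [hae] with x hx
  have h1 : (inner ℝ x (T x) : ℝ) = 1 := by
    have := frontier_le_subset_eq contT continuous_const (by rw [← hF]; exact hx.2)
    simpa using this
  rw [h1]
  exact hSadm x hx.1
end

section
/- Let K, T ⊂ ℝⁿ be compact symmetric convex bodies with T ⊄ K. Then there exists an ellipsoid F ⊆ T with F ⊄ K, and linearly independent vectors v₁,...,vₙ such that each vᵢ lies in ∂F ∩ ∂C, where C = conv(K ∪ F). -/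
open MeasureTheory Metric Set

noncomputable section

/-- Abbreviation for `ℝⁿ`. -/
abbrev E (n : ℕ) := EuclideanSpace ℝ (Fin n)

/-- A (nondegenerate, centrally symmetric) ellipsoid in `ℝⁿ`: the image of the closed unit
ball under an invertible linear map. -/
def IsEllipsoid {n : ℕ} (F : Set (EuclideanSpace ℝ (Fin n))) : Prop :=
  ∃ L : EuclideanSpace ℝ (Fin n) ≃ₗ[ℝ] EuclideanSpace ℝ (Fin n),
    F = L '' closedBall 0 1

set_option maxHeartbeats 1000000 in
/-- If `K, T ⊂ ℝⁿ` are compact symmetric convex bodies with `T ⊄ K`, there is an ellipsoid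
`F ⊆ T` with `F ⊄ K` and linearly independent `v₁, …, vₙ` each lying in
`∂F ∩ ∂(conv(K ∪ F))`. -/
theorem exists_ellipsoid_with_independent_contact_points
    (n : ℕ) (K T : Set (EuclideanSpace ℝ (Fin n)))
    (hKconv : Convex ℝ K) (hKcomp : IsCompact K) (hKsymm : K = -K)
    (hKint : (0 : EuclideanSpace ℝ (Fin n)) ∈ interior K)
    (hTconv : Convex ℝ T) (hTcomp : IsCompact T) (hTsymm : T = -T)
    (hTint : (0 : EuclideanSpace ℝ (Fin n)) ∈ interior T)
    (hTK : ¬ T ⊆ K) :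
    ∃ F : Set (EuclideanSpace ℝ (Fin n)), IsEllipsoid F ∧ F ⊆ T ∧ ¬ F ⊆ K ∧
      ∃ v : Fin n → EuclideanSpace ℝ (Fin n), LinearIndependent ℝ v ∧
        ∀ i, v i ∈ frontier F ∩ frontier (convexHull ℝ (K ∪ F)) := by
  classical
  have h0K : (0 : E n) ∈ K := interior_subset hKint
  obtain ⟨x, hxT, hxK⟩ := Set.not_subset.1 hTK
  -- shrink x slightly to get a point x' in the interior of T, still outside K
  have hopen : IsOpen ((fun t : ℝ => t • x) ⁻¹' Kᶜ) :=
    (hKcomp.isClosed.isOpen_compl).preimage (continuous_id.smul continuous_const)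
  have h1mem : (1 : ℝ) ∈ (fun t : ℝ => t • x) ⁻¹' Kᶜ := by
    simpa using hxK
  obtain ⟨δ₀, hδ₀, hball₀⟩ := Metric.isOpen_iff.1 hopen 1 h1mem
  set t₀ : ℝ := 1 - min δ₀ 1 / 2 with ht₀
  have ht₀mem : t₀ ∈ Metric.ball (1 : ℝ) δ₀ := by
    simp only [Metric.mem_ball, Real.dist_eq, ht₀]
    have h1 : min δ₀ 1 ≤ δ₀ := min_le_left _ _
    have h2 : 0 < min δ₀ 1 := lt_min hδ₀ one_pos
    rw [abs_of_nonpos (by linarith)]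
    linarith
  have ht₀pos : 0 < t₀ := by
    have : min δ₀ 1 ≤ 1 := min_le_right _ _
    have h2 : 0 < min δ₀ 1 := lt_min hδ₀ one_pos
    simp only [ht₀]; linarith
  have ht₀lt : t₀ < 1 := by
    have h2 : 0 < min δ₀ 1 := lt_min hδ₀ one_pos
    simp only [ht₀]; linarith
  set x' : E n := t₀ • x with hx'def
  have hx'K : x' ∉ K := hball₀ ht₀mem
  have hx'int : x' ∈ interior T := by
    have := hTconv.combo_interior_closure_mem_interior hTint
      (subset_closure hxT) (by linarith : (0:ℝ) < 1 - t₀) ht₀pos.le (by ring)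
    simpa [hx'def] using this
  have hx'ne : x' ≠ 0 := fun h => hx'K (h ▸ h0K)
  have hx'norm : (0:ℝ) < ‖x'‖ := norm_pos_iff.2 hx'ne
  -- the direction of x'
  set u : E n := ‖x'‖⁻¹ • x' with hudef
  have hu : ‖u‖ = 1 := norm_smul_inv_norm hx'ne
  have huu : (inner ℝ u u : ℝ) = 1 := by
    rw [real_inner_self_eq_norm_sq, hu]; norm_num
  have hux' : ‖x'‖ • u = x' := by
    rw [hudef, smul_smul, mul_inv_cancel₀ (ne_of_gt hx'norm), one_smul]
  -- the segment from -x' to x' lies in the interior of T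
  have hnegx'int : -x' ∈ interior T := by
    rw [hTsymm, show -T = (Homeomorph.neg (E n)) ⁻¹' T from rfl, ← Homeomorph.preimage_interior]
    simpa using hx'int
  set S : Set (E n) := segment ℝ (-x') x' with hSdef
  have hSsub : S ⊆ interior T := (hTconv.interior).segment_subset hnegx'int hx'int
  have hScomp : IsCompact S := by
    rw [hSdef, segment_eq_image' ℝ]
    exact (isCompact_Icc).image (by fun_prop)
  obtain ⟨ε, hε, hthick⟩ := hScomp.exists_cthickening_subset_open isOpen_interior hSsub
  -- the thin ellipsoid map
  set P : E n →ₗ[ℝ] E n :=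
    (LinearMap.toSpanSingleton ℝ (E n) u).comp (innerSL ℝ u).toLinearMap with hPdef
  have hP : ∀ v : E n, P v = (inner ℝ u v : ℝ) • u := fun v => rfl
  set ℓ : E n →ₗ[ℝ] E n := ε • LinearMap.id + (‖x'‖ - ε) • P with hℓdef
  set ℓ' : E n →ₗ[ℝ] E n := ε⁻¹ • LinearMap.id + (‖x'‖⁻¹ - ε⁻¹) • P with hℓ'def
  have hℓapp : ∀ v : E n, ℓ v = ε • v + ((‖x'‖ - ε) * (inner ℝ u v : ℝ)) • u := by
    intro v
    simp [hℓdef, hP, smul_smul]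
  have hℓ'app : ∀ v : E n, ℓ' v = ε⁻¹ • v + ((‖x'‖⁻¹ - ε⁻¹) * (inner ℝ u v : ℝ)) • u := by
    intro v
    simp [hℓ'def, hP, smul_smul]
  have hcomp1 : ℓ.comp ℓ' = LinearMap.id := by
    apply LinearMap.ext
    intro v
    simp only [LinearMap.comp_apply, LinearMap.id_apply, hℓapp, hℓ'app]
    rw [inner_add_right, inner_smul_right, inner_smul_right, huu]
    match_scalars <;> field_simp <;> ring
  have hcomp2 : ℓ'.comp ℓ = LinearMap.id := by
    apply LinearMap.ext
    intro v
    simp only [LinearMap.comp_apply, LinearMap.id_apply, hℓapp, hℓ'app]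
    rw [inner_add_right, inner_smul_right, inner_smul_right, huu]
    match_scalars <;> field_simp <;> ring
  set L : E n ≃ₗ[ℝ] E n := LinearEquiv.ofLinear ℓ ℓ' hcomp1 hcomp2 with hLdef
  have hLapp : ∀ v : E n, L v = ε • v + ((‖x'‖ - ε) * (inner ℝ u v : ℝ)) • u := hℓapp
  have hLsym : ∀ v w : E n, (inner ℝ (L v) w : ℝ) = inner ℝ v (L w) := by
    intro v w
    rw [hLapp v, hLapp w]
    simp only [inner_add_left, inner_add_right, real_inner_smul_left, real_inner_smul_right]
    rw [real_inner_comm u v]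
    ring
  have hLu : L u = x' := by
    rw [hLapp u, huu, mul_one, ← add_smul, show ε + (‖x'‖ - ε) = ‖x'‖ by ring, hux']
  -- the ellipsoid
  set F : Set (E n) := L '' closedBall 0 1 with hFdef
  have hFell : IsEllipsoid F := ⟨L, rfl⟩
  -- F ⊆ T
  have hFT : F ⊆ T := by
    rintro _ ⟨z, hz, rfl⟩
    rw [mem_closedBall, dist_zero_right] at hz
    set t : ℝ := inner ℝ u z with htdef
    have habs : |t| ≤ 1 := by
      calc |t| ≤ ‖u‖ * ‖z‖ := abs_real_inner_le_norm u z
      _ ≤ 1 := by rw [hu, one_mul]; exact hz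
    have htx'S : t • x' ∈ S := by
      rw [hSdef]
      refine ⟨(1 - t) / 2, (1 + t) / 2, by cases' abs_le.1 habs with h1 h2; linarith,
        by cases' abs_le.1 habs with h1 h2; linarith, by ring, ?_⟩
      rw [smul_neg]
      match_scalars
      ring
    have hdist : dist (L z) (t • x') ≤ ε := by
      have hzu : (inner ℝ z u : ℝ) = t := by rw [real_inner_comm]
      have hid : L z - t • x' = ε • (z - t • u) := by
        have hrw : t • x' = (t * ‖x'‖) • u := by rw [mul_smul, hux']
        rw [hLapp z, ← htdef, hrw]
        match_scalars <;> ring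
      have hnorm1 : ‖z - t • u‖ ^ 2 ≤ 1 := by
        rw [norm_sub_sq_real, inner_smul_right, hzu, norm_smul]
        rw [hu, mul_one, Real.norm_eq_abs]
        nlinarith [norm_nonneg z, sq_abs t]
      have hnorm2 : ‖z - t • u‖ ≤ 1 := by nlinarith [norm_nonneg (z - t • u)]
      rw [dist_eq_norm, hid, norm_smul, Real.norm_eq_abs, abs_of_pos hε]
      nlinarith
    exact interior_subset (hthick (mem_cthickening_of_dist_le _ _ _ _ htx'S hdist))
  -- x' ∈ F, so F ⊄ K
  have hx'F : x' ∈ F := ⟨u, by rw [mem_closedBall, dist_zero_right, hu], hLu⟩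
  have hFK : ¬ F ⊆ K := fun h => hx'K (h hx'F)
  -- separating functional for K and x'
  obtain ⟨f, c, hfK, hfx⟩ :=
    geometric_hahn_banach_closed_point hKconv hKcomp.isClosed hx'K
  set θ : E n := (InnerProductSpace.toDual ℝ (E n)).symm f with hθdef
  have hθapp : ∀ y : E n, (inner ℝ θ y : ℝ) = f y := fun y =>
    InnerProductSpace.toDual_symm_apply
  have hKθ : ∀ k ∈ K, (inner ℝ k θ : ℝ) < c := by
    intro k hk
    rw [real_inner_comm, hθapp]
    exact hfK k hk
  have hcLθ : c < ‖L θ‖ := by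
    have h1 : c < (inner ℝ θ x' : ℝ) := by rw [hθapp]; exact hfx
    have h2 : (inner ℝ θ x' : ℝ) ≤ ‖L θ‖ := by
      rw [← hLu, ← hLsym θ u]
      calc (inner ℝ (L θ) u : ℝ) ≤ ‖L θ‖ * ‖u‖ := real_inner_le_norm _ _
      _ = ‖L θ‖ := by rw [hu, mul_one]
    linarith
  -- a uniform radius bound for K
  obtain ⟨R₀, hR₀⟩ := hKcomp.isBounded.subset_closedBall (0 : E n)
  set R : ℝ := max R₀ 1 with hRdef
  have hRpos : (0:ℝ) < R := lt_of_lt_of_le one_pos (le_max_right _ _)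
  have hKR : ∀ k ∈ K, ‖k‖ ≤ R := by
    intro k hk
    have := hR₀ hk
    rw [mem_closedBall, dist_zero_right] at this
    exact this.trans (le_max_left _ _)
  -- operator norm bound for L
  set Lc : E n →L[ℝ] E n := LinearMap.toContinuousLinearMap (L : E n →ₗ[ℝ] E n) with hLcdef
  have hLc : ∀ y : E n, ‖L y‖ ≤ ‖Lc‖ * ‖y‖ := fun y => Lc.le_opNorm y
  have hLcnn : (0:ℝ) ≤ ‖Lc‖ := norm_nonneg _
  -- the neighbourhood of θ on which K is strictly dominated by the ellipsoid
  set δ : ℝ := (‖L θ‖ - c) / (R + ‖Lc‖ + 1) with hδdef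
  have hδpos : 0 < δ := div_pos (by linarith) (by linarith)
  have hN : ∀ g ∈ ball θ δ, ∀ k ∈ K, (inner ℝ k g : ℝ) < ‖L g‖ := by
    intro g hg k hk
    rw [mem_ball, dist_eq_norm] at hg
    have h2 : (inner ℝ k g : ℝ) - inner ℝ k θ ≤ R * δ := by
      rw [← inner_sub_right]
      calc (inner ℝ k (g - θ) : ℝ) ≤ ‖k‖ * ‖g - θ‖ := real_inner_le_norm _ _
      _ ≤ R * δ := mul_le_mul (hKR k hk) hg.le (norm_nonneg _) hRpos.le
    have h3 : ‖L θ‖ ≤ ‖L g‖ + ‖Lc‖ * δ := by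
      have : ‖L θ - L g‖ ≤ ‖Lc‖ * δ := by
        rw [← map_sub]
        calc ‖L (θ - g)‖ ≤ ‖Lc‖ * ‖θ - g‖ := hLc _
        _ ≤ ‖Lc‖ * δ := by
          apply mul_le_mul_of_nonneg_left _ hLcnn
          rw [norm_sub_rev]; exact hg.le
      have h4 := norm_sub_norm_le (L θ) (L g)
      linarith
    have h5 : (R + ‖Lc‖) * δ < ‖L θ‖ - c := by
      have hmul : δ * (R + ‖Lc‖ + 1) = ‖L θ‖ - c := div_mul_cancel₀ _ (by linarith)
      nlinarith [hδpos]
    have := hKθ k hk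
    nlinarith
  -- the ball around θ spans everything
  have hspan : Submodule.span ℝ (ball θ δ) = ⊤ := by
    apply Submodule.eq_top_of_nonempty_interior'
    exact ⟨θ, mem_interior.2 ⟨ball θ δ, Submodule.subset_span, isOpen_ball,
      mem_ball_self hδpos⟩⟩
  obtain ⟨b, hbsub, hbspan, hbli⟩ := exists_linearIndependent ℝ (ball θ δ)
  rw [hspan] at hbspan
  haveI : Fintype b := (hbli.setFinite).fintype
  have hcard : Fintype.card b = n := by
    have hB : Module.Basis b ℝ (E n) := Module.Basis.mk hbli (by rw [Subtype.range_coe, hbspan])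
    rw [← Module.finrank_eq_card_basis hB, finrank_euclideanSpace_fin]
  set e : Fin n ≃ b := (Fintype.equivFinOfCardEq hcard).symm with hedef
  set g : Fin n → E n := fun i => ((e i : b) : E n) with hgdef
  have hgmem : ∀ i, g i ∈ ball θ δ := fun i => hbsub (e i).2
  have hgli : LinearIndependent ℝ g := hbli.comp e e.injective
  -- basic facts about each g i
  have hLgpos : ∀ i, (0:ℝ) < ‖L (g i)‖ := by
    intro i
    have := hN (g i) (hgmem i) 0 h0K
    rwa [inner_zero_left] at this
  have hLgne : ∀ i, L (g i) ≠ 0 := fun i => norm_pos_iff.1 (hLgpos i)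
  have hgne : ∀ i, g i ≠ 0 := by
    intro i h
    exact hLgne i (by rw [h, map_zero])
  -- the contact points
  set v : Fin n → E n := fun i => ‖L (g i)‖⁻¹ • L (L (g i)) with hvdef
  have hvli : LinearIndependent ℝ v := by
    have h1 : LinearIndependent ℝ (fun i => L (L (g i))) := by
      have := hgli.map' (L.trans L).toLinearMap (LinearMap.ker_eq_bot_of_injective
        (L.trans L).injective)
      exact this
    have h2 := h1.units_smul (fun i => Units.mk0 (‖L (g i)‖⁻¹)
      (inv_ne_zero (ne_of_gt (hLgpos i))))
    exact h2
  refine ⟨F, hFell, hFT, hFK, v, hvli, fun i => ?_⟩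
  -- v i belongs to F
  have hvF : v i ∈ F := by
    refine ⟨‖L (g i)‖⁻¹ • L (g i), ?_, ?_⟩
    · rw [mem_closedBall, dist_zero_right, norm_smul, Real.norm_eq_abs,
        abs_of_pos (inv_pos.2 (hLgpos i)), inv_mul_cancel₀ (ne_of_gt (hLgpos i))]
    · rw [_root_.map_smul]
  -- the convex hull is contained in a halfspace touching v i
  have hhalf : ∀ y ∈ convexHull ℝ (K ∪ F), (inner ℝ y (g i) : ℝ) ≤ ‖L (g i)‖ := by
    intro y hy
    have hcvx : Convex ℝ {w : E n | (inner ℝ w (g i) : ℝ) ≤ ‖L (g i)‖} :=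
      convex_halfSpace_le (⟨fun a b => inner_add_left a b _,
        fun r a => real_inner_smul_left a _ r⟩ : IsLinearMap ℝ
          fun w : E n => (inner ℝ w (g i) : ℝ)) _
    have hsub : K ∪ F ⊆ {w : E n | (inner ℝ w (g i) : ℝ) ≤ ‖L (g i)‖} := by
      rintro w (hw | ⟨z, hz, rfl⟩)
      · exact (hN (g i) (hgmem i) w hw).le
      · rw [mem_closedBall, dist_zero_right] at hz
        show (inner ℝ (L z) (g i) : ℝ) ≤ ‖L (g i)‖
        rw [hLsym]
        calc (inner ℝ z (L (g i)) : ℝ) ≤ ‖z‖ * ‖L (g i)‖ := real_inner_le_norm _ _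
        _ ≤ 1 * ‖L (g i)‖ := mul_le_mul_of_nonneg_right hz (hLgpos i).le
        _ = ‖L (g i)‖ := one_mul _
    exact convexHull_min hsub hcvx hy
  have hvinner : (inner ℝ (v i) (g i) : ℝ) = ‖L (g i)‖ := by
    rw [hvdef]
    simp only
    rw [real_inner_smul_left, hLsym, real_inner_self_eq_norm_sq]
    rw [pow_two, ← mul_assoc, inv_mul_cancel₀ (ne_of_gt (hLgpos i)), one_mul]
  -- v i is not in the interior of the hull
  have hvnotint : v i ∉ interior (convexHull ℝ (K ∪ F)) := by
    intro hmem
    rw [mem_interior_iff_mem_nhds, Metric.mem_nhds_iff] at hmem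
    obtain ⟨r, hr, hball⟩ := hmem
    have hgnorm : (0:ℝ) < ‖g i‖ := norm_pos_iff.2 (hgne i)
    set p : E n := v i + (r / (2 * ‖g i‖)) • g i with hpdef
    have hpC : p ∈ convexHull ℝ (K ∪ F) := by
      apply hball
      rw [mem_ball, dist_eq_norm, hpdef]
      rw [add_sub_cancel_left, norm_smul, Real.norm_eq_abs,
        abs_of_pos (by positivity : (0:ℝ) < r / (2 * ‖g i‖))]
      rw [div_mul_eq_mul_div, mul_comm]
      rw [div_lt_iff₀ (by positivity)]
      nlinarith
    have := hhalf p hpC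
    rw [hpdef, inner_add_left, hvinner, real_inner_smul_left,
      real_inner_self_eq_norm_sq] at this
    have hpos : (0:ℝ) < r / (2 * ‖g i‖) * ‖g i‖ ^ 2 := by positivity
    linarith
  have hFC : F ⊆ convexHull ℝ (K ∪ F) :=
    (subset_union_right).trans (subset_convexHull ℝ _)
  constructor
  · exact ⟨subset_closure hvF, fun h => hvnotint (interior_mono hFC h)⟩
  · exact ⟨subset_closure (hFC hvF), hvnotint⟩

end
end

section
/- For every invertible linear map T : ℝⁿ → ℝⁿ, every symmetric convex body K, and every ellipsoid E: u_{TK}(TE) = T(u_K(E)), where u_K(E) is the unique ellipsoid contained in K minimizing M_E. Moreover u_K(tE) = u_K(E) for every t ≠ 0. -/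
open MeasureTheory Metric Set

noncomputable section
attribute [local instance] Classical.propDecidable

variable {n : ℕ}

/-- The uniform (rotation-invariant) probability measure on the unit sphere of `ℝⁿ`,
viewed as a measure on `ℝⁿ`. -/
def sphereProb (n : ℕ) : Measure (EuclideanSpace ℝ (Fin n)) :=
  letI σ : Measure (EuclideanSpace ℝ (Fin n)) :=
    ((volume : Measure (EuclideanSpace ℝ (Fin n))).toSphere).map Subtype.val
  (σ Set.univ)⁻¹ • σ

/-- The invariant probability measure `μ_E` on the boundary of the ellipsoid
`E = L(closedBall 0 1)`: the pushforward of the uniform sphere measure by `L`.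
(It does not depend on the choice of `L`.) -/
def ellMeasure {n : ℕ} (E : Set (EuclideanSpace ℝ (Fin n))) :
    Measure (EuclideanSpace ℝ (Fin n)) :=
  if h : IsEllipsoid E then (sphereProb n).map h.choose else 0

/-- `M_E(F) = (∫_{∂E} ‖x‖_F² dμ_E(x))^{1/2}`, where `‖·‖_F` is the Minkowski gauge of `F`. -/
def Mfun {n : ℕ} (E F : Set (EuclideanSpace ℝ (Fin n))) : ℝ :=
  Real.sqrt (∫ x, (gauge F x) ^ 2 ∂(ellMeasure E))

/-- `J_K(E) = inf { M_E(F) : F an ellipsoid contained in K }`. -/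
def Jfun {n : ℕ} (K E : Set (EuclideanSpace ℝ (Fin n))) : ℝ :=
  sInf { r | ∃ F, IsEllipsoid F ∧ F ⊆ K ∧ r = Mfun E F }


open Pointwise

/-- `F` is the unique ellipsoid contained in `K` minimizing `M_E`, i.e. `F = u_K(E)`. -/
def IsUniqueMin {n : ℕ} (K E F : Set (EuclideanSpace ℝ (Fin n))) : Prop :=
  IsEllipsoid F ∧ F ⊆ K ∧
    (∀ G, IsEllipsoid G → G ⊆ K → Mfun E F ≤ Mfun E G) ∧
    (∀ G, IsEllipsoid G → G ⊆ K → Mfun E G = Mfun E F → G = F)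

/-! ### Auxiliary lemmas -/

lemma contL (L : EuclideanSpace ℝ (Fin n) ≃ₗ[ℝ] EuclideanSpace ℝ (Fin n)) :
    Continuous ⇑L := L.toLinearMap.continuous_of_finiteDimensional

lemma gauge_image (L : EuclideanSpace ℝ (Fin n) ≃ₗ[ℝ] EuclideanSpace ℝ (Fin n))
    (s : Set (EuclideanSpace ℝ (Fin n))) (x : EuclideanSpace ℝ (Fin n)) :
    gauge (L '' s) (L x) = gauge s x := by
  unfold gauge
  congr 1
  ext r
  have h : ∀ r : ℝ, r • (L '' s) = L '' (r • s) :=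
    fun r => (Set.image_smul_comm L r s (fun c => L.map_smul r c)).symm
  simp only [Set.mem_setOf_eq, h, L.injective.mem_set_image]

lemma gauge_ell (A : EuclideanSpace ℝ (Fin n) ≃ₗ[ℝ] EuclideanSpace ℝ (Fin n))
    (x : EuclideanSpace ℝ (Fin n)) :
    gauge (A '' closedBall 0 1) x = ‖A.symm x‖ := by
  have : x = A (A.symm x) := (A.apply_symm_apply x).symm
  rw [this, gauge_image, gauge_closedBall zero_le_one, div_one, A.symm_apply_apply]

lemma norm_of_ball_preserving (M : EuclideanSpace ℝ (Fin n) ≃ₗ[ℝ] EuclideanSpace ℝ (Fin n))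
    (h : M '' closedBall 0 1 = closedBall 0 1) (x : EuclideanSpace ℝ (Fin n)) :
    ‖M x‖ = ‖x‖ := by
  have key : ∀ (N : EuclideanSpace ℝ (Fin n) ≃ₗ[ℝ] EuclideanSpace ℝ (Fin n)),
      N '' closedBall 0 1 ⊆ closedBall 0 1 → ∀ y, ‖N y‖ ≤ ‖y‖ := by
    intro N hN y
    rcases eq_or_ne y 0 with rfl | hy
    · simp
    · have hy' : 0 < ‖y‖ := norm_pos_iff.2 hy
      have h1 : (‖y‖⁻¹ • y) ∈ closedBall (0 : EuclideanSpace ℝ (Fin n)) 1 := by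
        simp [norm_smul, abs_of_nonneg (inv_nonneg.2 hy'.le), inv_mul_cancel₀ hy'.ne']
      have h2 : N (‖y‖⁻¹ • y) ∈ closedBall (0 : EuclideanSpace ℝ (Fin n)) 1 :=
        hN ⟨_, h1, rfl⟩
      rw [N.map_smul, mem_closedBall_zero_iff, norm_smul, Real.norm_eq_abs,
        abs_of_nonneg (inv_nonneg.2 hy'.le)] at h2
      calc ‖N y‖ = ‖y‖ * (‖y‖⁻¹ * ‖N y‖) := by field_simp
      _ ≤ ‖y‖ * 1 := by nlinarith
      _ = ‖y‖ := mul_one _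
  have h' : M.symm '' closedBall 0 1 = closedBall 0 1 := by
    conv_lhs => rw [← h, ← Set.image_comp]
    simp [Set.image_id']
  refine le_antisymm (key M h.subset x) ?_
  calc ‖x‖ = ‖M.symm (M x)‖ := by rw [M.symm_apply_apply]
  _ ≤ ‖M x‖ := key M.symm h'.subset (M x)

lemma sphere_map_inv (R : EuclideanSpace ℝ (Fin n) ≃ₗᵢ[ℝ] EuclideanSpace ℝ (Fin n)) :
    Measure.map R (sphereProb n) = sphereProb n := by
  set σ : Measure (EuclideanSpace ℝ (Fin n)) :=
    ((volume : Measure (EuclideanSpace ℝ (Fin n))).toSphere).map Subtype.val with hσdef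
  have hσ : Measure.map R σ = σ := by
    refine Measure.ext fun A hA => ?_
    have hmR : Measurable ⇑R := R.continuous.measurable
    rw [Measure.map_apply hmR hA, hσdef,
      Measure.map_apply measurable_subtype_coe (hmR hA),
      Measure.map_apply measurable_subtype_coe hA,
      Measure.toSphere_apply' _ (measurable_subtype_coe (hmR hA)),
      Measure.toSphere_apply' _ (measurable_subtype_coe hA),
      Subtype.image_preimage_coe, Subtype.image_preimage_coe]
    congr 1
    have hsph : (sphere (0:EuclideanSpace ℝ (Fin n)) 1) ∩ (R ⁻¹' A) =
        R ⁻¹' (sphere 0 1 ∩ A) := by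
      ext y
      simp only [Set.mem_inter_iff, Set.mem_preimage, mem_sphere_zero_iff_norm,
        R.norm_map]
    rw [hsph]
    have hsmul : Set.Ioo (0:ℝ) 1 • (R ⁻¹' (sphere 0 1 ∩ A)) =
        R ⁻¹' (Set.Ioo (0:ℝ) 1 • (sphere 0 1 ∩ A)) := by
      ext z
      constructor
      · rintro ⟨a, ha, b, hb, rfl⟩
        exact ⟨a, ha, R b, hb, (R.map_smul a b).symm⟩
      · rintro ⟨a, ha, c, hc, hz⟩
        refine ⟨a, ha, R.symm c, ?_, ?_⟩
        · simpa using hc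
        · apply R.injective
          rw [R.map_smul, R.apply_symm_apply]; exact hz
    rw [hsmul]
    exact R.measurePreserving.measure_preimage_emb
      R.toHomeomorph.measurableEmbedding _
  simp only [sphereProb, ← hσdef]
  rw [Measure.map_smul, hσ]

lemma ellMeasure_eq (L : EuclideanSpace ℝ (Fin n) ≃ₗ[ℝ] EuclideanSpace ℝ (Fin n))
    {E : Set (EuclideanSpace ℝ (Fin n))} (hE : E = L '' closedBall 0 1) :
    ellMeasure E = (sphereProb n).map L := by
  have hEll : IsEllipsoid E := ⟨L, hE⟩
  rw [ellMeasure, dif_pos hEll]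
  set L₀ := hEll.choose with hL₀
  have hspec : E = L₀ '' closedBall 0 1 := hEll.choose_spec
  set M : EuclideanSpace ℝ (Fin n) ≃ₗ[ℝ] EuclideanSpace ℝ (Fin n) := L₀.trans L.symm with hM
  have hMball : M '' closedBall 0 1 = closedBall 0 1 := by
    have : ⇑M = ⇑L.symm ∘ ⇑L₀ := rfl
    rw [this, Set.image_comp, ← hspec, hE, ← Set.image_comp]
    simp [Set.image_id']
  set R : EuclideanSpace ℝ (Fin n) ≃ₗᵢ[ℝ] EuclideanSpace ℝ (Fin n) :=
    ⟨M, norm_of_ball_preserving M hMball⟩ with hR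
  have hcomp : ⇑L₀ = ⇑L ∘ ⇑R := by
    funext x
    show L₀ x = L (M x)
    simp [hM]
  rw [hcomp, ← Measure.map_map (contL L).measurable R.continuous.measurable,
    sphere_map_inv R]

lemma Mfun_formula (L A : EuclideanSpace ℝ (Fin n) ≃ₗ[ℝ] EuclideanSpace ℝ (Fin n)) :
    Mfun (L '' closedBall 0 1) (A '' closedBall 0 1) =
      Real.sqrt (∫ x, ‖A.symm (L x)‖ ^ 2 ∂(sphereProb n)) := by
  rw [Mfun, ellMeasure_eq L rfl]
  congr 1
  have hg : (fun x => gauge (A '' closedBall 0 1) x ^ 2) =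
      fun x : EuclideanSpace ℝ (Fin n) => ‖A.symm x‖ ^ 2 := by
    funext x; rw [gauge_ell]
  rw [hg]
  rw [integral_map (f := fun x => ‖A.symm x‖ ^ 2) (contL L).measurable.aemeasurable
    (((contL A.symm).norm.pow 2).aestronglyMeasurable)]

lemma Mfun_map (T : EuclideanSpace ℝ (Fin n) ≃ₗ[ℝ] EuclideanSpace ℝ (Fin n))
    {E F : Set (EuclideanSpace ℝ (Fin n))} (hE : IsEllipsoid E) (hF : IsEllipsoid F) :
    Mfun (T '' E) (T '' F) = Mfun E F := by
  obtain ⟨L, rfl⟩ := hE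
  obtain ⟨A, rfl⟩ := hF
  have h1 : T '' (L '' closedBall 0 1) = (L.trans T) '' closedBall 0 1 := by
    rw [← Set.image_comp]; rfl
  have h2 : T '' (A '' closedBall 0 1) = (A.trans T) '' closedBall 0 1 := by
    rw [← Set.image_comp]; rfl
  rw [h1, h2, Mfun_formula, Mfun_formula]
  congr 1
  refine integral_congr_ae (Filter.Eventually.of_forall fun x => ?_)
  simp [LinearEquiv.trans_apply]

lemma Mfun_smul (t : ℝ) (ht : t ≠ 0)
    {E F : Set (EuclideanSpace ℝ (Fin n))} (hE : IsEllipsoid E) (hF : IsEllipsoid F) :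
    Mfun (t • E) F = |t| * Mfun E F := by
  obtain ⟨L, rfl⟩ := hE
  obtain ⟨A, rfl⟩ := hF
  have h1 : t • (L '' closedBall 0 1) =
      (L.trans (LinearEquiv.smulOfNeZero ℝ _ t ht)) '' closedBall 0 1 := by
    rw [← Set.image_smul, ← Set.image_comp]
    rfl
  rw [h1, Mfun_formula, Mfun_formula]
  have : (fun x : EuclideanSpace ℝ (Fin n) =>
      ‖A.symm ((L.trans (LinearEquiv.smulOfNeZero ℝ _ t ht)) x)‖ ^ 2) =
      fun x => t ^ 2 * ‖A.symm (L x)‖ ^ 2 := by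
    funext x
    show ‖A.symm (t • L x)‖ ^ 2 = _
    rw [_root_.map_smul, norm_smul, Real.norm_eq_abs, mul_pow, sq_abs]
  rw [this, integral_const_mul, Real.sqrt_mul (sq_nonneg t), Real.sqrt_sq_eq_abs]

lemma IsEllipsoid.image (T : EuclideanSpace ℝ (Fin n) ≃ₗ[ℝ] EuclideanSpace ℝ (Fin n))
    {E : Set (EuclideanSpace ℝ (Fin n))} (hE : IsEllipsoid E) : IsEllipsoid (T '' E) := by
  obtain ⟨L, rfl⟩ := hE
  exact ⟨L.trans T, by rw [← Set.image_comp]; rfl⟩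

/-- Equivariance and scale invariance of the map `u_K`: for every invertible linear `T`,
`u_{TK}(TE) = T(u_K(E))`, and `u_K(tE) = u_K(E)` for every `t ≠ 0`. -/
theorem uMap_equivariant_and_scale_invariant
    (n : ℕ) (K : Set (EuclideanSpace ℝ (Fin n)))
    (hKconv : Convex ℝ K) (hKcomp : IsCompact K) (hKsymm : K = -K)
    (hKint : (0 : EuclideanSpace ℝ (Fin n)) ∈ interior K)
    (E : Set (EuclideanSpace ℝ (Fin n))) (hE : IsEllipsoid E)
    (T : EuclideanSpace ℝ (Fin n) ≃ₗ[ℝ] EuclideanSpace ℝ (Fin n))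
    (t : ℝ) (ht : t ≠ 0) :
    (∀ F, IsUniqueMin K E F → IsUniqueMin (T '' K) (T '' E) (T '' F)) ∧
    (∀ F, IsUniqueMin K E F ↔ IsUniqueMin K (t • E) F) := by
  have habs : (0:ℝ) < |t| := abs_pos.2 ht
  constructor
  · rintro F ⟨hFell, hFK, hmin, huniq⟩
    refine ⟨hFell.image T, Set.image_mono hFK, ?_, ?_⟩
    · intro G hGell hGK
      have hG' : G = T '' (T.symm '' G) := by
        rw [← Set.image_comp]; simp [Set.image_id']
      have hG'ell : IsEllipsoid (T.symm '' G) := hGell.image T.symm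
      have hG'K : T.symm '' G ⊆ K := by
        intro y ⟨x, hx, hxy⟩
        obtain ⟨k, hk, hkx⟩ := hGK hx
        rw [← hxy, ← hkx]
        simpa using hk
      calc Mfun (T '' E) (T '' F) = Mfun E F := Mfun_map T hE hFell
      _ ≤ Mfun E (T.symm '' G) := hmin _ hG'ell hG'K
      _ = Mfun (T '' E) G := by
          conv_rhs => rw [hG']
          exact (Mfun_map T hE hG'ell).symm
    · intro G hGell hGK hGF
      have hG' : G = T '' (T.symm '' G) := by
        rw [← Set.image_comp]; simp [Set.image_id']
      have hG'ell : IsEllipsoid (T.symm '' G) := hGell.image T.symm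
      have hG'K : T.symm '' G ⊆ K := by
        intro y ⟨x, hx, hxy⟩
        obtain ⟨k, hk, hkx⟩ := hGK hx
        rw [← hxy, ← hkx]
        simpa using hk
      have : Mfun E (T.symm '' G) = Mfun E F := by
        have e1 : Mfun (T '' E) G = Mfun E (T.symm '' G) := by
          conv_lhs => rw [hG']
          exact Mfun_map T hE hG'ell
        have e2 : Mfun (T '' E) (T '' F) = Mfun E F := Mfun_map T hE hFell
        rw [← e1, ← e2, hGF]
      have := huniq _ hG'ell hG'K this
      rw [hG', this]
  · intro F
    constructor
    · rintro ⟨hFell, hFK, hmin, huniq⟩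
      refine ⟨hFell, hFK, ?_, ?_⟩
      · intro G hGell hGK
        rw [Mfun_smul t ht hE hFell, Mfun_smul t ht hE hGell]
        exact mul_le_mul_of_nonneg_left (hmin _ hGell hGK) habs.le
      · intro G hGell hGK hGF
        rw [Mfun_smul t ht hE hGell, Mfun_smul t ht hE hFell] at hGF
        exact huniq _ hGell hGK (mul_left_cancel₀ habs.ne' hGF)
    · rintro ⟨hFell, hFK, hmin, huniq⟩
      refine ⟨hFell, hFK, ?_, ?_⟩
      · intro G hGell hGK
        have := hmin _ hGell hGK
        rw [Mfun_smul t ht hE hFell, Mfun_smul t ht hE hGell] at this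
        exact le_of_mul_le_mul_left this habs
      · intro G hGell hGK hGF
        refine huniq _ hGell hGK ?_
        rw [Mfun_smul t ht hE hGell, Mfun_smul t ht hE hFell, hGF]


end
end

section
/- Let K ⊂ ℝⁿ be a symmetric convex body with Löwner-John ellipsoid (maximal volume inscribed ellipsoid) equal to the unit ball B. Then for every ellipsoid F ⊆ K, M*(F) ≤ 1, where M*(F) = ∫_{S^{n-1}} ‖x‖_{F°} dμ(x) is computed via the polar body F° = {y : ⟨x,y⟩ ≤ 1 for all x ∈ F} (using M*² (F) = ∫ ‖x‖²_{F°} dμ), with equality for F = B. -/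
open MeasureTheory Metric Set

noncomputable section

set_option linter.unusedSectionVars false
set_option maxHeartbeats 1000000

section AuxLJ
open Filter Topology Matrix


-- scalar lemma
lemma prodS {n : ℕ} (lam : Fin n → ℝ)
    (h : ∀ t : ℝ, t ∈ Ioo (0:ℝ) 1 → ∏ i, (1 - t + t * lam i) ≤ 1) :
    ∑ i, lam i ≤ n := by
  by_contra hlt
  push_neg at hlt
  set d : ℝ := ∑ i, (lam i - 1) with hd
  have hd0 : 0 < d := by
    have : (n : ℝ) = ∑ _i : Fin n, (1:ℝ) := by simp
    simp only [hd, Finset.sum_sub_distrib]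
    rw [this] at hlt; linarith [hlt]
  set g : ℝ → ℝ := fun t => ∏ i, (1 + t * (lam i - 1)) with hg
  have hderiv : HasDerivAt g d 0 := by
    have h1 : ∀ i ∈ Finset.univ, HasDerivAt (fun t : ℝ => 1 + t * (lam i - 1)) (lam i - 1) 0 := by
      intro i _
      simpa using ((hasDerivAt_id (0:ℝ)).mul_const (lam i - 1)).const_add 1
    have := HasDerivAt.fun_finsetProd h1
    simpa [hd] using this
  have hslope : Tendsto (fun t => (g t - g 0) / t) (𝓝[≠] 0) (𝓝 d) := by
    have := hasDerivAt_iff_tendsto_slope.mp hderiv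
    have heq : (fun t => (g t - g 0) / t) = slope g 0 := by
      funext t; simp [slope_def_field]
    rw [heq]; exact this
  have h1 : ∀ᶠ t in 𝓝[>] (0:ℝ), 0 < (g t - g 0) / t := by
    have : ∀ᶠ t in 𝓝[≠] (0:ℝ), 0 < (g t - g 0) / t :=
      hslope.eventually (eventually_gt_nhds hd0)
    exact nhdsWithin_mono 0 (fun x hx => ne_of_gt hx) this
  have h2 : ∀ᶠ t in 𝓝[>] (0:ℝ), t ∈ Ioo (0:ℝ) 1 :=
    Ioo_mem_nhdsGT_of_mem ⟨le_refl 0, one_pos⟩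
  obtain ⟨t, ht1, ht2⟩ := (h1.and h2).exists
  have hg0 : g 0 = 1 := by simp [hg]
  have : 1 < g t := by
    have := ht1
    rw [hg0] at this
    have ht0 : 0 < t := ht2.1
    have := (div_pos_iff).mp this
    rcases this with ⟨h_, _⟩ | ⟨_, h_⟩
    · linarith
    · linarith
  have hle : g t ≤ 1 := by
    have h' := h t ht2
    have : g t = ∏ i, (1 - t + t * lam i) := by
      apply Finset.prod_congr rfl; intro i _; ring
    rw [this]; exact h'
  linarith


variable {n : ℕ}

lemma spec_interp (P : Matrix (Fin n) (Fin n) ℝ) (hP : P.PosSemidef) (t : ℝ) :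
    (1 - t) • (1 : Matrix (Fin n) (Fin n) ℝ) + t • P
      = (hP.1.eigenvectorUnitary : Matrix (Fin n) (Fin n) ℝ)
        * (Matrix.diagonal (fun i => 1 - t + t * hP.1.eigenvalues i))
        * star (hP.1.eigenvectorUnitary : Matrix (Fin n) (Fin n) ℝ) := by
  set U : Matrix (Fin n) (Fin n) ℝ := (hP.1.eigenvectorUnitary : Matrix (Fin n) (Fin n) ℝ) with hU
  have hUU : U * star U = 1 := (Matrix.mem_unitaryGroup_iff).mp hP.1.eigenvectorUnitary.2
  have hdiag : Matrix.diagonal (fun i => 1 - t + t * hP.1.eigenvalues i)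
      = (1 - t) • (1 : Matrix (Fin n) (Fin n) ℝ)
        + t • Matrix.diagonal (RCLike.ofReal ∘ hP.1.eigenvalues) := by
    ext i j
    rcases eq_or_ne i j with rfl | hij
    · simp [Matrix.diagonal_apply_eq, Matrix.one_apply_eq]
    · simp [Matrix.diagonal_apply_ne _ hij, Matrix.one_apply_ne hij]
  rw [hdiag, Matrix.mul_add, Matrix.add_mul, Matrix.mul_smul, Matrix.smul_mul,
    Matrix.mul_smul, Matrix.smul_mul, mul_one, hUU]
  conv_lhs => rw [hP.1.spectral_theorem, Unitary.conjStarAlgAut_apply]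

lemma det_interp (P : Matrix (Fin n) (Fin n) ℝ) (hP : P.PosSemidef) (t : ℝ) :
    ((1 - t) • (1 : Matrix (Fin n) (Fin n) ℝ) + t • P).det
      = ∏ i, (1 - t + t * hP.1.eigenvalues i) := by
  rw [spec_interp P hP t, Matrix.det_mul, Matrix.det_mul, mul_comm, ← mul_assoc, ← Matrix.det_mul,
    show star (hP.1.eigenvectorUnitary : Matrix (Fin n) (Fin n) ℝ) * hP.1.eigenvectorUnitary = 1
      from (Matrix.mem_unitaryGroup_iff').mp hP.1.eigenvectorUnitary.2]
  simp [Matrix.det_diagonal]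

lemma trace_eq (P : Matrix (Fin n) (Fin n) ℝ) (hP : P.PosSemidef) :
    P.trace = ∑ i, hP.1.eigenvalues i := by
  calc P.trace = _ := congrArg Matrix.trace (hP.1.spectral_theorem)
    _ = ∑ i, hP.1.eigenvalues i := by
        rw [Unitary.conjStarAlgAut_apply, Matrix.trace_mul_cycle,
          show star (hP.1.eigenvectorUnitary : Matrix (Fin n) (Fin n) ℝ) * hP.1.eigenvectorUnitary = 1
            from (Matrix.mem_unitaryGroup_iff').mp hP.1.eigenvectorUnitary.2, Matrix.one_mul]
        simp [Matrix.trace_diagonal]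


variable {n : ℕ}
local notation "E" => EuclideanSpace ℝ (Fin n)

lemma tEL_one : Matrix.toEuclideanLin (1 : Matrix (Fin n) (Fin n) ℝ) = LinearMap.id := by
  ext x
  simp [Matrix.toEuclideanLin_apply]

lemma tEL_mul (A B : Matrix (Fin n) (Fin n) ℝ) :
    Matrix.toEuclideanLin (A * B) = (Matrix.toEuclideanLin A) ∘ₗ (Matrix.toEuclideanLin B) := by
  ext x
  simp [Matrix.toEuclideanLin_apply, Matrix.mulVec_mulVec]

lemma tEL_det (M : Matrix (Fin n) (Fin n) ℝ) :
    LinearMap.det (Matrix.toEuclideanLin M) = M.det := by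
  have : Matrix.toEuclideanLin M
      = ((WithLp.linearEquiv 2 ℝ (Fin n → ℝ)).symm.conj (Matrix.toLin' M)) := rfl
  rw [this, LinearEquiv.conj_apply, LinearMap.comp_assoc, LinearMap.det_conj, LinearMap.det_toLin']

lemma tEL_adj (A : Matrix (Fin n) (Fin n) ℝ) :
    Matrix.toEuclideanLin Aᴴ = LinearMap.adjoint (Matrix.toEuclideanLin A) :=
  Matrix.toEuclideanLin_conjTranspose_eq_adjoint A

example : (volume : Measure E).IsAddHaarMeasure := by infer_instance

lemma vol_image (M : Matrix (Fin n) (Fin n) ℝ) (s : Set E) :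
    volume ((Matrix.toEuclideanLin M) '' s) = ENNReal.ofReal |M.det| * volume s := by
  rw [Measure.addHaar_image_linearMap, tEL_det]

example : volume (closedBall (0:E) 1) ≠ 0 := (measure_closedBall_pos volume 0 one_pos).ne'
example : volume (closedBall (0:E) 1) ≠ ⊤ := (measure_closedBall_lt_top).ne


variable {E' : Type*} [AddCommGroup E'] [Module ℝ E']

lemma gauge_seminorm_le_one (p : Seminorm ℝ E') (x : E') :
    gauge {y | p y ≤ 1} x = p x := by
  apply le_antisymm
  · refine le_of_forall_pos_le_add fun ε hε => ?_
    have hpε : 0 < p x + ε := add_pos_of_nonneg_of_pos (apply_nonneg _ _) hε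
    refine gauge_le_of_mem hpε.le ?_
    refine ⟨(p x + ε)⁻¹ • x, ?_, smul_inv_smul₀ hpε.ne' _⟩
    simp only [mem_setOf_eq, map_smul_eq_mul, Real.norm_eq_abs,
      abs_of_pos (inv_pos.2 hpε)]
    rw [inv_mul_le_iff₀ hpε, mul_one]
    linarith
  · rw [gauge]
    refine le_csInf ⟨p x + 1, ?_⟩ ?_
    · have hpε : 0 < p x + 1 := add_pos_of_nonneg_of_pos (apply_nonneg _ _) one_pos
      refine ⟨hpε, (p x + 1)⁻¹ • x, ?_, smul_inv_smul₀ hpε.ne' _⟩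
      simp only [mem_setOf_eq, map_smul_eq_mul, Real.norm_eq_abs, abs_of_pos (inv_pos.2 hpε)]
      rw [inv_mul_le_iff₀ hpε, mul_one]; linarith
    · rintro r ⟨hr, y, hy, rfl⟩
      simp only [mem_setOf_eq] at hy
      rw [map_smul_eq_mul, Real.norm_eq_abs, abs_of_pos hr]
      exact mul_le_of_le_one_right hr.le hy


variable {n : ℕ}
local notation "E" => EuclideanSpace ℝ (Fin n)

section meas
variable (μ : Measure (EuclideanSpace ℝ (Fin n))) [IsProbabilityMeasure μ]
  (hsupp : μ (sphere (0 : EuclideanSpace ℝ (Fin n)) 1)ᶜ = 0)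
  (hinv : ∀ O : EuclideanSpace ℝ (Fin n) ≃ₗᵢ[ℝ] EuclideanSpace ℝ (Fin n), μ.map O = μ)

include hsupp in
lemma ae_norm_one : ∀ᵐ x ∂μ, ‖x‖ = 1 := by
  rw [ae_iff]
  refine measure_mono_null ?_ hsupp
  intro x hx
  simp only [mem_compl_iff, mem_sphere_iff_norm, sub_zero]
  exact hx

lemma coord_continuous (i : Fin n) : Continuous (fun x : EuclideanSpace ℝ (Fin n) => x i) :=
  (EuclideanSpace.proj (𝕜 := ℝ) i).continuous

include hsupp in
lemma coord_sq_le (i : Fin n) : ∀ᵐ x ∂μ, |x i| ≤ 1 := by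
  filter_upwards [ae_norm_one μ hsupp] with x hx
  have h1 : (x i)^2 ≤ ∑ j, (x j)^2 := by
    refine Finset.single_le_sum (f := fun j => (x j)^2) (fun j _ => sq_nonneg _) (Finset.mem_univ i)
  have h2 : ∑ j, (x j)^2 = 1 := by
    have := EuclideanSpace.norm_eq x
    rw [hx] at this
    have h3 : (1:ℝ) = Real.sqrt (∑ j, ‖x j‖^2) := this
    have h4 : (∑ j, ‖x j‖^2) = ∑ j, (x j)^2 := by
      congr 1; funext j; rw [Real.norm_eq_abs, sq_abs]
    nlinarith [Real.sq_sqrt (Finset.sum_nonneg (fun j (_ : j ∈ Finset.univ) => sq_nonneg ‖x j‖)), h3, h4]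
  have h5 := h1.trans h2.le
  nlinarith [abs_nonneg (x i), sq_abs (x i)]

include hsupp in
lemma integrable_coord_mul (i k : Fin n) :
    Integrable (fun x : EuclideanSpace ℝ (Fin n) => x i * x k) μ := by
  refine Integrable.mono' (integrable_const (1:ℝ))
    (((coord_continuous i).mul (coord_continuous k)).aestronglyMeasurable) ?_
  filter_upwards [coord_sq_le μ hsupp i, coord_sq_le μ hsupp k] with x h1 h2
  rw [Real.norm_eq_abs, abs_mul]
  exact mul_le_one₀ h1 (abs_nonneg _) h2

include hinv in
lemma integral_comp_isometry (O : EuclideanSpace ℝ (Fin n) ≃ₗᵢ[ℝ] EuclideanSpace ℝ (Fin n))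
    (f : EuclideanSpace ℝ (Fin n) → ℝ) (hf : AEStronglyMeasurable f μ) :
    ∫ x, f (O x) ∂μ = ∫ x, f x ∂μ := by
  conv_rhs => rw [← hinv O]
  rw [integral_map O.continuous.aemeasurable]
  rw [hinv O]
  exact hf

noncomputable def flipO (i : Fin n) : EuclideanSpace ℝ (Fin n) ≃ₗᵢ[ℝ] EuclideanSpace ℝ (Fin n) :=
  LinearIsometryEquiv.piLpCongrRight 2
    (fun l => if l = i then LinearIsometryEquiv.neg ℝ else LinearIsometryEquiv.refl ℝ ℝ)

lemma flipO_apply (i : Fin n) (x : EuclideanSpace ℝ (Fin n)) (k : Fin n) :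
    flipO i x k = if k = i then -(x k) else x k := by
  have : flipO i x k = (if k = i then LinearIsometryEquiv.neg ℝ else LinearIsometryEquiv.refl ℝ ℝ) (x k) := rfl
  rw [this, apply_ite (fun (f : ℝ ≃ₗᵢ[ℝ] ℝ) => f (x k))]
  simp

include hsupp hinv in
lemma integral_coord_mul_ne (i k : Fin n) (hik : i ≠ k) :
    ∫ x, x i * x k ∂μ = 0 := by
  have hmeas : AEStronglyMeasurable (fun x : EuclideanSpace ℝ (Fin n) => x i * x k) μ :=
    ((coord_continuous i).mul (coord_continuous k)).aestronglyMeasurable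
  have h := integral_comp_isometry μ hinv (flipO i) _ hmeas
  have heq : ∀ x : EuclideanSpace ℝ (Fin n), (flipO i x) i * (flipO i x) k = -(x i * x k) := by
    intro x
    rw [flipO_apply, flipO_apply, if_pos rfl, if_neg (by exact fun h => hik h.symm)]
    ring
  rw [integral_congr_ae (Filter.Eventually.of_forall heq)] at h
  rw [integral_neg] at h
  linarith

noncomputable def swapO (i k : Fin n) : EuclideanSpace ℝ (Fin n) ≃ₗᵢ[ℝ] EuclideanSpace ℝ (Fin n) :=
  LinearIsometryEquiv.piLpCongrLeft 2 ℝ ℝ (Equiv.swap i k)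

lemma swapO_apply (i k : Fin n) (x : EuclideanSpace ℝ (Fin n)) (l : Fin n) :
    swapO i k x l = x (Equiv.swap i k l) := by
  have : swapO i k x l = x ((Equiv.swap i k).symm l) := rfl
  rw [this, Equiv.symm_swap]

include hinv in
lemma integral_coord_sq_swap (i k : Fin n) :
    ∫ x, x i * x i ∂μ = ∫ x, x k * x k ∂μ := by
  have hmeas : AEStronglyMeasurable (fun x : EuclideanSpace ℝ (Fin n) => x i * x i) μ :=
    ((coord_continuous i).mul (coord_continuous i)).aestronglyMeasurable
  have h := integral_comp_isometry μ hinv (swapO i k) _ hmeas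
  have heq : ∀ x : EuclideanSpace ℝ (Fin n), (swapO i k x) i * (swapO i k x) i = x k * x k := by
    intro x
    rw [swapO_apply, Equiv.swap_apply_left]
  rw [integral_congr_ae (Filter.Eventually.of_forall heq)] at h
  linarith

include hsupp hinv in
lemma integral_coord_sq (hn : n ≠ 0) (i : Fin n) :
    ∫ x, x i * x i ∂μ = 1 / n := by
  have hsum : ∑ k : Fin n, ∫ x, x k * x k ∂μ = 1 := by
    rw [← integral_finset_sum _ (fun k _ => integrable_coord_mul μ hsupp k k)]
    have : ∫ x, ∑ k : Fin n, x k * x k ∂μ = ∫ _x, (1:ℝ) ∂μ := by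
      refine integral_congr_ae ?_
      filter_upwards [ae_norm_one μ hsupp] with x hx
      have h3 : (1:ℝ) = Real.sqrt (∑ j, ‖x j‖^2) := by rw [← EuclideanSpace.norm_eq x, hx]
      have h4 : (∑ j, ‖x j‖^2) = ∑ j, x j * x j := by
        congr 1; funext j; rw [Real.norm_eq_abs, sq_abs, sq]
      nlinarith [Real.sq_sqrt (Finset.sum_nonneg (fun j (_ : j ∈ Finset.univ) => sq_nonneg ‖x j‖))]
    rw [this, integral_const, probReal_univ]
    simp
  have hall : ∀ k : Fin n, ∫ x, x k * x k ∂μ = ∫ x, x i * x i ∂μ := by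
    intro k; exact integral_coord_sq_swap μ hinv k i
  rw [Finset.sum_congr rfl (fun k _ => hall k), Finset.sum_const, Finset.card_univ,
    Fintype.card_fin, nsmul_eq_mul] at hsum
  field_simp at hsum ⊢
  linarith [hsum]

include hsupp hinv in
lemma integral_coord_mul_eq (hn : n ≠ 0) (i k : Fin n) :
    ∫ x, x i * x k ∂μ = if i = k then 1 / (n:ℝ) else 0 := by
  rcases eq_or_ne i k with rfl | hik
  · rw [if_pos rfl]; exact integral_coord_sq μ hsupp hinv hn i
  · rw [if_neg hik]; exact integral_coord_mul_ne μ hsupp hinv i k hik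

include hsupp in
lemma integrable_inner_sq (v : EuclideanSpace ℝ (Fin n)) :
    Integrable (fun x : EuclideanSpace ℝ (Fin n) => (inner ℝ v x : ℝ)^2) μ := by
  refine Integrable.mono' (integrable_const (‖v‖^2))
    (Continuous.aestronglyMeasurable ((innerSL ℝ v).continuous.pow 2)) ?_
  filter_upwards [ae_norm_one μ hsupp] with x hx
  rw [Real.norm_eq_abs, abs_of_nonneg (sq_nonneg _)]
  calc (inner ℝ v x : ℝ)^2 ≤ (‖v‖ * ‖x‖)^2 := by
        have h := abs_real_inner_le_norm v x
        nlinarith [abs_nonneg (inner ℝ v x : ℝ), sq_abs (inner ℝ v x : ℝ)]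
    _ = ‖v‖^2 := by rw [hx]; ring

include hsupp hinv in
lemma integral_inner_sq (hn : n ≠ 0) (v : EuclideanSpace ℝ (Fin n)) :
    ∫ x, (inner ℝ v x : ℝ)^2 ∂μ = ‖v‖^2 / n := by
  have hexp : ∀ x : EuclideanSpace ℝ (Fin n),
      (inner ℝ v x : ℝ)^2 = ∑ i, ∑ k, (v i * v k) * (x i * x k) := by
    intro x
    have hv : (inner ℝ v x : ℝ) = ∑ i, v i * x i := by
      rw [PiLp.inner_apply]
      simp [RCLike.inner_apply, conj_trivial, mul_comm]
    rw [hv, sq, Finset.sum_mul_sum]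
    congr 1; funext i; congr 1; funext k; ring
  rw [integral_congr_ae (Filter.Eventually.of_forall hexp)]
  have hint : ∀ i k : Fin n, Integrable (fun x : EuclideanSpace ℝ (Fin n) => (v i * v k) * (x i * x k)) μ :=
    fun i k => (integrable_coord_mul μ hsupp i k).const_mul _
  rw [integral_finset_sum _ (fun i _ => integrable_finset_sum _ (fun k _ => hint i k))]
  have : ∀ i : Fin n, ∫ x, ∑ k, (v i * v k) * (x i * x k) ∂μ
      = ∑ k, (v i * v k) * ∫ x, x i * x k ∂μ := by
    intro i
    rw [integral_finset_sum _ (fun k _ => hint i k)]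
    exact Finset.sum_congr rfl (fun k _ => integral_const_mul _ _)
  rw [Finset.sum_congr rfl (fun i _ => this i)]
  have hnorm : ‖v‖^2 = ∑ i, v i * v i := by
    rw [← real_inner_self_eq_norm_sq, PiLp.inner_apply]
    simp [RCLike.inner_apply, conj_trivial, sq]
  rw [hnorm, Finset.sum_div]
  refine Finset.sum_congr rfl (fun i _ => ?_)
  rw [Finset.sum_eq_single i]
  · rw [integral_coord_mul_eq μ hsupp hinv hn i i, if_pos rfl]; ring
  · intro k _ hk
    rw [integral_coord_mul_eq μ hsupp hinv hn i k, if_neg (fun h => hk h.symm)]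
    ring
  · intro h; exact absurd (Finset.mem_univ i) h

end meas


variable {n : ℕ}


lemma polar_image (T : EuclideanSpace ℝ (Fin n) ≃ₗ[ℝ] EuclideanSpace ℝ (Fin n)) :
    {y : EuclideanSpace ℝ (Fin n) | ∀ z ∈ ⇑T '' closedBall 0 1, (inner ℝ z y : ℝ) ≤ 1}
      = {y : EuclideanSpace ℝ (Fin n) | ‖(LinearMap.adjoint T.toLinearMap) y‖ ≤ 1} := by
  ext y
  simp only [mem_setOf_eq, mem_image, mem_closedBall_zero_iff]
  constructor
  · intro h
    set w := (LinearMap.adjoint T.toLinearMap) y with hw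
    rcases eq_or_ne w 0 with h0 | h0
    · rw [h0]; simp
    have hkey : (inner ℝ (T (‖w‖⁻¹ • w)) y : ℝ) ≤ 1 := by
      refine h _ ⟨‖w‖⁻¹ • w, ?_, rfl⟩
      rw [norm_smul, norm_inv, norm_norm, inv_mul_cancel₀ (norm_ne_zero_iff.2 h0)]
    have : (inner ℝ (T (‖w‖⁻¹ • w)) y : ℝ) = ‖w‖ := by
      have hadj : (inner ℝ ((T.toLinearMap : EuclideanSpace ℝ (Fin n) →ₗ[ℝ] EuclideanSpace ℝ (Fin n)) (‖w‖⁻¹ • w)) y : ℝ)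
          = inner ℝ (‖w‖⁻¹ • w) w := by
        rw [hw, LinearMap.adjoint_inner_right]
      have h2 : (inner ℝ (‖w‖⁻¹ • w) w : ℝ) = ‖w‖⁻¹ * ‖w‖^2 := by
        rw [real_inner_smul_left, real_inner_self_eq_norm_sq]
      calc (inner ℝ (T (‖w‖⁻¹ • w)) y : ℝ) = inner ℝ (‖w‖⁻¹ • w) w := hadj
        _ = ‖w‖⁻¹ * ‖w‖^2 := h2
        _ = ‖w‖ := by field_simp [norm_ne_zero_iff.2 h0]
    rw [this] at hkey
    exact hkey
  · rintro h z ⟨u, hu, rfl⟩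
    have hadj : (inner ℝ (T u) y : ℝ) = inner ℝ u ((LinearMap.adjoint T.toLinearMap) y) := by
      rw [LinearMap.adjoint_inner_right]
      rfl
    rw [hadj]
    calc (inner ℝ u ((LinearMap.adjoint T.toLinearMap) y) : ℝ)
        ≤ ‖u‖ * ‖(LinearMap.adjoint T.toLinearMap) y‖ := real_inner_le_norm _ _
      _ ≤ 1 := mul_le_one₀ hu (norm_nonneg _) h

lemma gauge_polar_image (T : EuclideanSpace ℝ (Fin n) ≃ₗ[ℝ] EuclideanSpace ℝ (Fin n))
    (x : EuclideanSpace ℝ (Fin n)) :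
    gauge {y : EuclideanSpace ℝ (Fin n) | ∀ z ∈ ⇑T '' closedBall 0 1, (inner ℝ z y : ℝ) ≤ 1} x
      = ‖(LinearMap.adjoint T.toLinearMap) x‖ := by
  rw [polar_image T]
  have : {y : EuclideanSpace ℝ (Fin n) | ‖(LinearMap.adjoint T.toLinearMap) y‖ ≤ 1}
      = {y | ((normSeminorm ℝ (EuclideanSpace ℝ (Fin n))).comp
          (LinearMap.adjoint T.toLinearMap)) y ≤ 1} := rfl
  rw [this, gauge_seminorm_le_one]
  rfl

lemma polar_ball :
    {y : EuclideanSpace ℝ (Fin n) | ∀ z ∈ closedBall (0 : EuclideanSpace ℝ (Fin n)) 1,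
        (inner ℝ z y : ℝ) ≤ 1} = closedBall (0 : EuclideanSpace ℝ (Fin n)) 1 := by
  ext y
  simp only [mem_setOf_eq, mem_closedBall_zero_iff]
  constructor
  · intro h
    rcases eq_or_ne y 0 with rfl | h0
    · simp
    have hkey := h (‖y‖⁻¹ • y) (by
      rw [norm_smul, norm_inv, norm_norm, inv_mul_cancel₀ (norm_ne_zero_iff.2 h0)])
    rw [real_inner_smul_left, real_inner_self_eq_norm_sq] at hkey
    have : ‖y‖⁻¹ * ‖y‖^2 = ‖y‖ := by field_simp [norm_ne_zero_iff.2 h0]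
    linarith [this ▸ hkey]
  · intro h z hz
    calc (inner ℝ z y : ℝ) ≤ ‖z‖ * ‖y‖ := real_inner_le_norm _ _
      _ ≤ 1 := mul_le_one₀ hz (norm_nonneg _) h


variable {n : ℕ}

lemma tEL_mul' (A B : Matrix (Fin n) (Fin n) ℝ) :
    Matrix.toEuclideanLin (A * B) = (Matrix.toEuclideanLin A) ∘ₗ (Matrix.toEuclideanLin B) := by
  ext x; simp [Matrix.toEuclideanLin_apply, Matrix.mulVec_mulVec]

-- matrix of a linear map
lemma matrix_of_lin (T : EuclideanSpace ℝ (Fin n) ≃ₗ[ℝ] EuclideanSpace ℝ (Fin n)) :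
    Matrix.toEuclideanLin (Matrix.of fun i j => T (EuclideanSpace.single j 1) i)
      = T.toLinearMap := by
  apply Module.Basis.ext (EuclideanSpace.basisFun (Fin n) ℝ).toBasis
  intro j
  have hb : ((EuclideanSpace.basisFun (Fin n) ℝ).toBasis : Module.Basis (Fin n) ℝ (EuclideanSpace ℝ (Fin n))) j
      = EuclideanSpace.single j 1 := by
    simp [EuclideanSpace.basisFun_apply]
  rw [hb]
  apply (WithLp.equiv 2 (Fin n → ℝ)).injective
  funext i
  rw [WithLp.equiv_apply, WithLp.equiv_apply, Matrix.ofLp_toEuclideanLin_apply]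
  have hsing : WithLp.ofLp (EuclideanSpace.single j (1:ℝ)) = Pi.single j 1 :=
    PiLp.ofLp_single _ _ _
  rw [hsing]
  have : ((Matrix.of fun i j => T (EuclideanSpace.single j 1) i) *ᵥ Pi.single j 1) i
      = T (EuclideanSpace.single j 1) i := by
    rw [Matrix.mulVec_single]
    simp
  exact this

-- norm sq of adjoint in coordinates
lemma adj_norm_sq (T : EuclideanSpace ℝ (Fin n) ≃ₗ[ℝ] EuclideanSpace ℝ (Fin n))
    (x : EuclideanSpace ℝ (Fin n)) :
    ‖(LinearMap.adjoint T.toLinearMap) x‖^2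
      = ∑ j, (inner ℝ (T (EuclideanSpace.single j 1)) x : ℝ)^2 := by
  set w := (LinearMap.adjoint T.toLinearMap) x with hw
  have h1 : ‖w‖^2 = ∑ j, w j * w j := by
    rw [← real_inner_self_eq_norm_sq, PiLp.inner_apply]
    simp [RCLike.inner_apply, conj_trivial, sq]
  rw [h1]
  refine Finset.sum_congr rfl (fun j _ => ?_)
  have h2 : w j = inner ℝ (EuclideanSpace.single j (1:ℝ)) w := by
    rw [EuclideanSpace.inner_single_left]
    simp
  have h3 : (inner ℝ (EuclideanSpace.single j (1:ℝ)) w : ℝ)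
      = inner ℝ (T (EuclideanSpace.single j 1)) x := by
    rw [hw, LinearMap.adjoint_inner_right]
    rfl
  rw [h2, h3, sq]

-- trace = sum of col norms
lemma trace_col_norms (T : EuclideanSpace ℝ (Fin n) ≃ₗ[ℝ] EuclideanSpace ℝ (Fin n)) :
    ((Matrix.of fun i j => T (EuclideanSpace.single j 1) i)
      * (Matrix.of fun i j => T (EuclideanSpace.single j 1) i)ᴴ).trace
      = ∑ j, ‖T (EuclideanSpace.single j 1)‖^2 := by
  rw [Matrix.trace]
  have : ∀ j : Fin n, ‖T (EuclideanSpace.single j 1)‖^2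
      = ∑ i, T (EuclideanSpace.single j 1) i * T (EuclideanSpace.single j 1) i := by
    intro j
    rw [← real_inner_self_eq_norm_sq, PiLp.inner_apply]
    simp [RCLike.inner_apply, conj_trivial, sq]
  rw [Finset.sum_congr rfl (fun j (_ : j ∈ Finset.univ) => this j), Finset.sum_comm]
  refine Finset.sum_congr rfl (fun i _ => ?_)
  rw [Matrix.diag_apply, Matrix.mul_apply]
  refine Finset.sum_congr rfl (fun j _ => ?_)
  simp [Matrix.conjTranspose_apply]

lemma interp_subset (K : Set (EuclideanSpace ℝ (Fin n)))
    (hKconv : Convex ℝ K) (h0K : (0 : EuclideanSpace ℝ (Fin n)) ∈ K)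
    (hball : closedBall (0 : EuclideanSpace ℝ (Fin n)) 1 ⊆ K)
    (T : EuclideanSpace ℝ (Fin n) ≃ₗ[ℝ] EuclideanSpace ℝ (Fin n))
    (hFK : ⇑T '' closedBall 0 1 ⊆ K)
    (A : Matrix (Fin n) (Fin n) ℝ) (hA : Matrix.toEuclideanLin A = T.toLinearMap)
    (t : ℝ) (ht : t ∈ Ioo (0:ℝ) 1)
    (M : Matrix (Fin n) (Fin n) ℝ) (hMher : M.IsHermitian)
    (hMM : M * M = (1 - t) • 1 + t • (A * Aᴴ)) (hMdet : M.det ≠ 0) :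
    ⇑(Matrix.toEuclideanLin M) '' closedBall 0 1 ⊆ K := by
  rintro _ ⟨x, hx, rfl⟩
  rw [mem_closedBall_zero_iff] at hx
  have hMunit : IsUnit M.det := isUnit_iff_ne_zero.2 hMdet
  set u := Matrix.toEuclideanLin M⁻¹ x with hu
  have hMu : Matrix.toEuclideanLin M u = x := by
    rw [hu, ← LinearMap.comp_apply, ← tEL_mul, Matrix.mul_nonsing_inv _ hMunit, tEL_one,
      LinearMap.id_apply]
  set w := LinearMap.adjoint T.toLinearMap u with hw
  have hy : Matrix.toEuclideanLin M x = (1 - t) • u + t • (T w) := by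
    have h1 : Matrix.toEuclideanLin M x = Matrix.toEuclideanLin (M * M) u := by
      rw [tEL_mul, LinearMap.comp_apply, hMu]
    have h2 : Matrix.toEuclideanLin ((1 - t) • (1 : Matrix (Fin n) (Fin n) ℝ)
          + t • (A * Aᴴ)) u = (1 - t) • u + t • (T w) := by
      have e1 : Matrix.toEuclideanLin ((1 - t) • (1 : Matrix (Fin n) (Fin n) ℝ)
            + t • (A * Aᴴ))
          = (1 - t) • (Matrix.toEuclideanLin (1 : Matrix (Fin n) (Fin n) ℝ))
            + t • Matrix.toEuclideanLin (A * Aᴴ) := by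
        rw [map_add, LinearEquiv.map_smul, LinearEquiv.map_smul]
      rw [e1, LinearMap.add_apply, LinearMap.smul_apply, LinearMap.smul_apply, tEL_one,
        LinearMap.id_apply, tEL_mul, LinearMap.comp_apply, tEL_adj, hA]
      rfl
    rw [h1, hMM, h2]
  have hself : LinearMap.adjoint (Matrix.toEuclideanLin M) = Matrix.toEuclideanLin M := by
    rw [← tEL_adj, hMher.eq]
  have hinner : (1 - t) * ‖u‖^2 + t * ‖w‖^2 = ‖x‖^2 := by
    have way1 : (inner ℝ u (Matrix.toEuclideanLin M x) : ℝ) = ‖x‖^2 := by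
      have h3 : (inner ℝ ((LinearMap.adjoint (Matrix.toEuclideanLin M)) u) x : ℝ)
          = inner ℝ u (Matrix.toEuclideanLin M x) :=
        LinearMap.adjoint_inner_left (Matrix.toEuclideanLin M) x u
      rw [← h3, hself, hMu, real_inner_self_eq_norm_sq]
    have way2 : (inner ℝ u (Matrix.toEuclideanLin M x) : ℝ)
        = (1 - t) * ‖u‖^2 + t * ‖w‖^2 := by
      rw [hy, inner_add_right, real_inner_smul_right, real_inner_smul_right]
      congr 1
      · rw [real_inner_self_eq_norm_sq]
      · congr 1
        have h4 : (inner ℝ ((LinearMap.adjoint T.toLinearMap) u) w : ℝ)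
            = inner ℝ u (T.toLinearMap w) :=
          LinearMap.adjoint_inner_left T.toLinearMap w u
        have h5 : (inner ℝ u (T.toLinearMap w) : ℝ) = inner ℝ w w := by
          rw [← h4, ← hw]
        have h6 : (inner ℝ u (T w) : ℝ) = inner ℝ w w := h5
        rw [h6, real_inner_self_eq_norm_sq]
    rw [← way1, way2]
  set a := ‖u‖ with ha
  set c := ‖w‖ with hc
  have ha0 : 0 ≤ a := norm_nonneg _
  have hc0 : 0 ≤ c := norm_nonneg _
  have hsum : (1 - t) * a^2 + t * c^2 ≤ 1 := by
    rw [hinner]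
    have := mul_le_one₀ hx (norm_nonneg x) hx
    nlinarith [this]
  set α := (1 - t) * a with hα
  set β := t * c with hβ
  have hα0 : 0 ≤ α := mul_nonneg (by linarith [ht.2]) ha0
  have hβ0 : 0 ≤ β := mul_nonneg (le_of_lt ht.1) hc0
  have hαβ : α + β ≤ 1 := by
    rw [hα, hβ]
    have hq : 0 ≤ t * (1 - t) * (a - c)^2 :=
      mul_nonneg (mul_nonneg ht.1.le (by linarith [ht.2])) (sq_nonneg _)
    nlinarith [hq, hsum, ha0, hc0, ht.1.le, ht.2.le,
      sq_nonneg ((1 - t) * a + t * c - 1), sq_nonneg ((1 - t) * a + t * c + 1),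
      mul_nonneg (mul_nonneg (by linarith [ht.2] : (0:ℝ) ≤ 1 - t) ha0)
        (mul_nonneg ht.1.le hc0)]
  set b := a⁻¹ • u with hb
  set f := T (c⁻¹ • w) with hf
  have hbK : b ∈ K := by
    apply hball
    rw [mem_closedBall_zero_iff, hb, norm_smul, norm_inv, Real.norm_eq_abs, abs_of_nonneg ha0]
    rcases eq_or_ne a 0 with h0 | h0
    · have hu0 : u = 0 := norm_eq_zero.1 h0
      simp [hu0]
    · rw [← ha, inv_mul_cancel₀ h0]
  have hfK : f ∈ K := by
    apply hFK
    refine ⟨c⁻¹ • w, ?_, rfl⟩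
    rw [mem_closedBall_zero_iff, norm_smul, norm_inv, Real.norm_eq_abs, abs_of_nonneg hc0]
    rcases eq_or_ne c 0 with h0 | h0
    · have hw0 : w = 0 := norm_eq_zero.1 h0
      simp [hw0]
    · rw [← hc, inv_mul_cancel₀ h0]
  have hdecomp : Matrix.toEuclideanLin M x
      = α • b + β • f + (1 - α - β) • (0 : EuclideanSpace ℝ (Fin n)) := by
    rw [smul_zero, add_zero, hy]
    congr 1
    · rw [hb, smul_smul, hα]
      rcases eq_or_ne a 0 with h0 | h0
      · have hu0 : u = 0 := norm_eq_zero.1 h0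
        simp [hu0]
      · rw [mul_assoc, mul_inv_cancel₀ h0, mul_one]
    · rw [hf, hβ, ← LinearEquiv.map_smul, ← LinearEquiv.map_smul, smul_smul]
      congr 1
      rcases eq_or_ne c 0 with h0 | h0
      · have hw0 : w = 0 := norm_eq_zero.1 h0
        simp [hw0]
      · rw [mul_assoc, mul_inv_cancel₀ h0, mul_one]
  rw [hdecomp]
  have hmem := hKconv.sum_mem (t := Finset.univ (α := Fin 3))
    (w := ![α, β, 1 - α - β]) (z := ![b, f, 0])
    (by intro i _; fin_cases i <;> simp [hα0, hβ0] <;> linarith)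
    (by simp [Fin.sum_univ_three] <;> ring)
    (by intro i _
        fin_cases i
        · simpa using hbK
        · simpa using hfK
        · simpa using h0K)
  simpa [Fin.sum_univ_three] using hmem

open scoped MatrixOrder in
lemma trace_le (K : Set (EuclideanSpace ℝ (Fin n)))
    (hKconv : Convex ℝ K) (h0K : (0 : EuclideanSpace ℝ (Fin n)) ∈ K)
    (hball : closedBall (0 : EuclideanSpace ℝ (Fin n)) 1 ⊆ K)
    (hmax : ∀ F : Set (EuclideanSpace ℝ (Fin n)), IsEllipsoid F → F ⊆ K →
      volume F ≤ volume (closedBall (0 : EuclideanSpace ℝ (Fin n)) 1))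
    (T : EuclideanSpace ℝ (Fin n) ≃ₗ[ℝ] EuclideanSpace ℝ (Fin n))
    (hFK : ⇑T '' closedBall 0 1 ⊆ K)
    (A : Matrix (Fin n) (Fin n) ℝ) (hA : Matrix.toEuclideanLin A = T.toLinearMap) :
    (A * Aᴴ).trace ≤ (n : ℝ) := by
  set P := A * Aᴴ with hP
  have hPsd : P.PosSemidef := Matrix.posSemidef_self_mul_conjTranspose A
  have hdet : ∀ t : ℝ, t ∈ Ioo (0:ℝ) 1 → ∏ i, (1 - t + t * hPsd.1.eigenvalues i) ≤ 1 := by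
    intro t ht
    set Q := (1 - t) • (1 : Matrix (Fin n) (Fin n) ℝ) + t • P with hQ
    have hQpd : Q.PosDef := by
      have ht1 : (0:ℝ) < 1 - t := by linarith [ht.2]
      exact (Matrix.PosDef.one.smul ht1).add_posSemidef (hPsd.smul ht.1.le)
    set M := CFC.sqrt Q with hM
    have hMher : M.IsHermitian := (CFC.sqrt_nonneg Q).posSemidef.1
    have hMM : M * M = Q := CFC.sqrt_mul_sqrt_self Q hQpd.posSemidef.nonneg
    have hdetQ : M.det * M.det = Q.det := by rw [← Matrix.det_mul, hMM]
    have hQdetpos : 0 < Q.det := hQpd.det_pos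
    have hMdet : M.det ≠ 0 := by
      intro h0
      rw [h0, mul_zero] at hdetQ
      exact hQdetpos.ne hdetQ
    have hsub : ⇑(Matrix.toEuclideanLin M) '' closedBall 0 1 ⊆ K :=
      interp_subset K hKconv h0K hball T hFK A hA t ht M hMher (by rw [hMM, hQ]) hMdet
    have hMunit : IsUnit M.det := isUnit_iff_ne_zero.2 hMdet
    have hEll : IsEllipsoid (⇑(Matrix.toEuclideanLin M) '' closedBall 0 1) := by
      refine ⟨LinearEquiv.ofLinear (Matrix.toEuclideanLin M) (Matrix.toEuclideanLin M⁻¹)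
        (by rw [← tEL_mul, Matrix.mul_nonsing_inv _ hMunit, tEL_one])
        (by rw [← tEL_mul, Matrix.nonsing_inv_mul _ hMunit, tEL_one]), rfl⟩
    have hvol := hmax _ hEll hsub
    rw [vol_image] at hvol
    have hvolB0 : volume (closedBall (0 : EuclideanSpace ℝ (Fin n)) 1) ≠ 0 :=
      (measure_closedBall_pos volume 0 one_pos).ne'
    have hvolBtop : volume (closedBall (0 : EuclideanSpace ℝ (Fin n)) 1) ≠ ⊤ :=
      (measure_closedBall_lt_top).ne
    have hof : ENNReal.ofReal |M.det| ≤ 1 := by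
      have h1 : ENNReal.ofReal |M.det| * volume (closedBall (0 : EuclideanSpace ℝ (Fin n)) 1)
          ≤ 1 * volume (closedBall (0 : EuclideanSpace ℝ (Fin n)) 1) := by
        rw [one_mul]; exact hvol
      exact (ENNReal.mul_le_mul_iff_left hvolB0 hvolBtop).1 h1
    have habs : |M.det| ≤ 1 := ENNReal.ofReal_le_one.1 hof
    have hQle : Q.det ≤ 1 := by
      rw [← hdetQ]
      nlinarith [abs_nonneg M.det, sq_abs M.det]
    rw [← det_interp P hPsd t, ← hQ]
    exact hQle
  have hsum := prodS _ hdet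
  rw [trace_eq P hPsd]
  exact hsum

end AuxLJ

/-- If the Löwner–John (maximal-volume inscribed) ellipsoid of the symmetric convex body `K`
is the unit ball `B`, then `M*(F)² = ∫_{S^{n-1}} ‖x‖²_{F°} dμ ≤ 1` for every ellipsoid
`F ⊆ K`, where `F°` is the polar body, with equality for `F = B`. -/
theorem mean_width_extremality_of_LJ
    (n : ℕ) (K : Set (EuclideanSpace ℝ (Fin n)))
    (hKconv : Convex ℝ K) (hKcomp : IsCompact K) (hKsymm : K = -K)
    (hKint : (0 : EuclideanSpace ℝ (Fin n)) ∈ interior K)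
    (hball : closedBall (0 : EuclideanSpace ℝ (Fin n)) 1 ⊆ K)
    (hmax : ∀ F : Set (EuclideanSpace ℝ (Fin n)), IsEllipsoid F → F ⊆ K →
      volume F ≤ volume (closedBall (0 : EuclideanSpace ℝ (Fin n)) 1))
    (μ : Measure (EuclideanSpace ℝ (Fin n))) [IsProbabilityMeasure μ]
    (hsupp : μ (sphere (0 : EuclideanSpace ℝ (Fin n)) 1)ᶜ = 0)
    (hinv : ∀ O : EuclideanSpace ℝ (Fin n) ≃ₗᵢ[ℝ] EuclideanSpace ℝ (Fin n),
      μ.map O = μ) :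
    (∀ F : Set (EuclideanSpace ℝ (Fin n)), IsEllipsoid F → F ⊆ K →
      (∫ x, (gauge {y | ∀ z ∈ F, (inner ℝ z y : ℝ) ≤ 1} x) ^ 2 ∂μ) ≤ 1) ∧
    (∫ x, (gauge {y | ∀ z ∈ closedBall (0 : EuclideanSpace ℝ (Fin n)) 1,
        (inner ℝ z y : ℝ) ≤ 1} x) ^ 2 ∂μ) = 1 := by
  have hn : n ≠ 0 := by
    intro h
    subst h
    haveI : Subsingleton (EuclideanSpace ℝ (Fin 0)) :=
      (WithLp.equiv 2 (Fin 0 → ℝ)).subsingleton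
    have hsph : (sphere (0 : EuclideanSpace ℝ (Fin 0)) 1) = ∅ := by
      ext x
      simp only [mem_sphere_iff_norm, sub_zero, mem_empty_iff_false, iff_false]
      rw [Subsingleton.elim x 0, norm_zero]
      norm_num
    rw [hsph, compl_empty, measure_univ] at hsupp
    exact one_ne_zero hsupp
  have hnpos : (0:ℝ) < n := Nat.cast_pos.2 (Nat.pos_of_ne_zero hn)
  have h0K : (0 : EuclideanSpace ℝ (Fin n)) ∈ K := hball (by
    rw [mem_closedBall_zero_iff, norm_zero]; norm_num)
  constructor
  · rintro F ⟨T, rfl⟩ hFK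
    calc ∫ x, (gauge {y | ∀ z ∈ ⇑T '' closedBall 0 1, (inner ℝ z y : ℝ) ≤ 1} x) ^ 2 ∂μ
        = ∫ x, ∑ j, (inner ℝ (T (EuclideanSpace.single j 1)) x : ℝ)^2 ∂μ := by
          have hpt : ∀ x : EuclideanSpace ℝ (Fin n),
              (gauge {y | ∀ z ∈ ⇑T '' closedBall 0 1, (inner ℝ z y : ℝ) ≤ 1} x) ^ 2
                = ∑ j, (inner ℝ (T (EuclideanSpace.single j 1)) x : ℝ)^2 := fun x => by
            rw [gauge_polar_image T x, ← adj_norm_sq T x]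
          exact integral_congr_ae (Filter.Eventually.of_forall hpt)
      _ = ∑ j, ∫ x, (inner ℝ (T (EuclideanSpace.single j 1)) x : ℝ)^2 ∂μ :=
          integral_finset_sum _ (fun j _ => integrable_inner_sq μ hsupp _)
      _ = ∑ j, ‖T (EuclideanSpace.single j 1)‖^2 / n :=
          Finset.sum_congr rfl fun j _ => integral_inner_sq μ hsupp hinv hn _
      _ = (∑ j, ‖T (EuclideanSpace.single j 1)‖^2) / n := by rw [Finset.sum_div]
      _ ≤ 1 := by
          rw [div_le_one hnpos, ← trace_col_norms T]
          exact trace_le K hKconv h0K hball hmax T hFK _ (matrix_of_lin T)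
  · rw [polar_ball]
    calc ∫ x, (gauge (closedBall (0 : EuclideanSpace ℝ (Fin n)) 1) x) ^ 2 ∂μ
        = ∫ x, (1:ℝ) ∂μ := by
          refine integral_congr_ae ?_
          filter_upwards [ae_norm_one μ hsupp] with x hx
          simp only [gauge_closedBall zero_le_one, div_one, hx, one_pow]
      _ = 1 := by rw [integral_const, probReal_univ]; simp

end
end

section
/- Let K ⊂ ℝⁿ be a smooth, strictly convex symmetric body, and let F₁, F₂ be ellipsoids each containing K such that there exists a finite set of points u₁,...,u_s ∈ ∂K ∩ ∂F₁ ∩ ∂F₂ spanning ℝⁿ, and at each uᵢ the (unique) supporting hyperplane of K supports both F₁ and F₂. Then F₁ = F₂. -/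
open Metric Set

noncomputable section

/-- The unique supporting functional of the unit ball at a unit vector `x` is `⟪x, ·⟫`. -/
lemma support_unit_ball_unique {n : ℕ} {x : EuclideanSpace ℝ (Fin n)} (hx : ‖x‖ = 1)
    (f : EuclideanSpace ℝ (Fin n) →L[ℝ] ℝ) (hfx : f x = 1)
    (hf : ∀ y ∈ closedBall (0 : EuclideanSpace ℝ (Fin n)) 1, f y ≤ 1) :
    ∀ y, f y = inner ℝ x y := by
  have habs : ∀ z : EuclideanSpace ℝ (Fin n), ‖z‖ ≤ 1 → |f z| ≤ 1 := by
    intro z hz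
    have h1 : f z ≤ 1 := hf z (by simpa [mem_closedBall, dist_zero_right] using hz)
    have h2 : f (-z) ≤ 1 := hf (-z) (by simpa [mem_closedBall, dist_zero_right] using hz)
    rw [map_neg] at h2
    exact abs_le.2 ⟨by linarith, h1⟩
  have hnorm : ‖f‖ ≤ 1 := by
    refine f.opNorm_le_bound zero_le_one ?_
    intro y
    rcases eq_or_ne y 0 with rfl | hy0
    · simp
    · have hy : ‖y‖ ≠ 0 := norm_ne_zero_iff.2 hy0
      have hz : ‖(‖y‖⁻¹ • y : EuclideanSpace ℝ (Fin n))‖ ≤ 1 := by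
        rw [norm_smul, norm_inv, norm_norm, inv_mul_cancel₀ hy]
      have := habs _ hz
      rw [map_smul, smul_eq_mul, abs_mul, abs_inv, abs_norm] at this
      have hpos : (0 : ℝ) < ‖y‖ := lt_of_le_of_ne (norm_nonneg _) (Ne.symm hy)
      calc ‖f y‖ = ‖y‖ * (‖y‖⁻¹ * |f y|) := by
            rw [Real.norm_eq_abs]; field_simp
        _ ≤ ‖y‖ * 1 := by
            exact mul_le_mul_of_nonneg_left this (norm_nonneg _)
        _ = 1 * ‖y‖ := by ring
  set w := (InnerProductSpace.toDual ℝ (EuclideanSpace ℝ (Fin n))).symm f with hw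
  have hwapp : ∀ y, (inner ℝ w y : ℝ) = f y := fun y =>
    InnerProductSpace.toDual_symm_apply
  have hwnorm : ‖w‖ ≤ 1 := by
    rw [hw, LinearIsometryEquiv.norm_map]; exact hnorm
  have hwx : (inner ℝ w x : ℝ) = 1 := by rw [hwapp, hfx]
  have hwx' : w = x := by
    have hsq : ‖w - x‖ ^ 2 ≤ 0 := by
      rw [norm_sub_sq_real, hwx, hx]
      nlinarith [norm_nonneg w]
    have : ‖w - x‖ = 0 := le_antisymm (by nlinarith [norm_nonneg (w - x)]) (norm_nonneg _)
    exact sub_eq_zero.1 (norm_eq_zero.1 this)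
  intro y
  rw [← hwapp, hwx']

/-- Membership in an ellipsoid in terms of the inverse map. -/
lemma mem_ellipsoid_iff {n : ℕ} (L : EuclideanSpace ℝ (Fin n) ≃ₗ[ℝ] EuclideanSpace ℝ (Fin n))
    (y : EuclideanSpace ℝ (Fin n)) :
    y ∈ L '' closedBall 0 1 ↔ ‖L.symm y‖ ≤ 1 := by
  constructor
  · rintro ⟨z, hz, rfl⟩
    simpa [mem_closedBall, dist_zero_right] using hz
  · intro h
    exact ⟨L.symm y, by simpa [mem_closedBall, dist_zero_right] using h, L.apply_symm_apply y⟩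

/-- A point on the frontier of an ellipsoid has unit preimage norm. -/
lemma frontier_ellipsoid {n : ℕ} (L : EuclideanSpace ℝ (Fin n) ≃ₗ[ℝ] EuclideanSpace ℝ (Fin n))
    {y : EuclideanSpace ℝ (Fin n)} (hy : y ∈ frontier (L '' closedBall 0 1)) :
    ‖L.symm y‖ = 1 := by
  have e := L.toContinuousLinearEquiv
  have himg : L '' closedBall 0 1 =
      L.toContinuousLinearEquiv.toHomeomorph '' closedBall 0 1 := rfl
  rw [himg, ← Homeomorph.image_frontier,
    frontier_closedBall (0 : EuclideanSpace ℝ (Fin n)) one_ne_zero] at hy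
  obtain ⟨z, hz, rfl⟩ := hy
  have : L.symm (L z) = z := L.symm_apply_apply z
  simpa [this, mem_sphere_iff_norm] using hz

/-- A functional supporting an ellipsoid at a boundary point is determined. -/
lemma support_ellipsoid {n : ℕ} (L : EuclideanSpace ℝ (Fin n) ≃ₗ[ℝ] EuclideanSpace ℝ (Fin n))
    {v : EuclideanSpace ℝ (Fin n)} (hv : v ∈ frontier (L '' closedBall 0 1))
    (f : EuclideanSpace ℝ (Fin n) →L[ℝ] ℝ) (hfv : f v = 1)
    (hf : ∀ x ∈ L '' closedBall 0 1, f x ≤ 1) :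
    ∀ y, f y = inner ℝ (L.symm v) (L.symm y) := by
  have hx : ‖L.symm v‖ = 1 := frontier_ellipsoid L hv
  set e := L.toContinuousLinearEquiv with he
  set g := f.comp (e : EuclideanSpace ℝ (Fin n) →L[ℝ] EuclideanSpace ℝ (Fin n)) with hg
  have hgx : g (L.symm v) = 1 := by
    have : e (L.symm v) = v := L.apply_symm_apply v
    simp [hg, this, hfv]
  have hgball : ∀ z ∈ closedBall (0 : EuclideanSpace ℝ (Fin n)) 1, g z ≤ 1 := by
    intro z hz
    exact hf (L z) ⟨z, hz, rfl⟩
  have key := support_unit_ball_unique hx g hgx hgball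
  intro y
  have := key (L.symm y)
  have heq : g (L.symm y) = f y := by
    have : e (L.symm y) = y := L.apply_symm_apply y
    simp [hg, this, hfv]
  rw [← heq, this]

/-- If `K` is a smooth strictly convex symmetric body and `F₁, F₂` are ellipsoids containing
`K` which share with `K` a spanning set of common boundary points `u₁, …, u_s`, at each of
which the unique supporting hyperplane of `K` supports both `F₁` and `F₂`, then `F₁ = F₂`. -/
theorem ellipsoids_eq_of_common_supporting_contact_points
    (n : ℕ) (K : Set (EuclideanSpace ℝ (Fin n)))
    (hKconv : Convex ℝ K) (hKcomp : IsCompact K) (hKsymm : K = -K)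
    (hKint : (0 : EuclideanSpace ℝ (Fin n)) ∈ interior K)
    (hKstrict : StrictConvex ℝ K)
    (hKsmooth : ∀ u ∈ frontier K,
      ∃! f : EuclideanSpace ℝ (Fin n) →L[ℝ] ℝ, f u = 1 ∧ ∀ x ∈ K, f x ≤ 1)
    (F₁ F₂ : Set (EuclideanSpace ℝ (Fin n)))
    (hF₁ : IsEllipsoid F₁) (hF₂ : IsEllipsoid F₂)
    (hKF₁ : K ⊆ F₁) (hKF₂ : K ⊆ F₂)
    (s : ℕ) (u : Fin s → EuclideanSpace ℝ (Fin n))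
    (hu : ∀ i, u i ∈ frontier K ∩ frontier F₁ ∩ frontier F₂)
    (hspan : Submodule.span ℝ (Set.range u) = ⊤)
    (hsupport : ∀ i, ∃ f : EuclideanSpace ℝ (Fin n) →L[ℝ] ℝ,
      f (u i) = 1 ∧ (∀ x ∈ K, f x ≤ 1) ∧ (∀ x ∈ F₁, f x ≤ 1) ∧ (∀ x ∈ F₂, f x ≤ 1)) :
    F₁ = F₂ := by
  obtain ⟨L₁, rfl⟩ := hF₁
  obtain ⟨L₂, rfl⟩ := hF₂
  -- For each contact point, the bilinear forms of the two ellipsoids agree.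
  have hpoint : ∀ i, ∀ y, (inner ℝ (L₁.symm (u i)) (L₁.symm y) : ℝ)
      = inner ℝ (L₂.symm (u i)) (L₂.symm y) := by
    intro i
    obtain ⟨f, hf1, _, hfF₁, hfF₂⟩ := hsupport i
    have h₁ := support_ellipsoid L₁ ((hu i).1.2) f hf1 hfF₁
    have h₂ := support_ellipsoid L₂ ((hu i).2) f hf1 hfF₂
    intro y
    rw [← h₁ y, h₂ y]
  -- By the spanning hypothesis, they agree everywhere.
  have hall : ∀ w y, (inner ℝ (L₁.symm w) (L₁.symm y) : ℝ)
      = inner ℝ (L₂.symm w) (L₂.symm y) := by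
    intro w
    have hw : w ∈ Submodule.span ℝ (Set.range u) := hspan ▸ Submodule.mem_top
    refine Submodule.span_induction ?_ ?_ ?_ ?_ hw
    · rintro x ⟨i, rfl⟩
      exact hpoint i
    · intro y; simp
    · intro a b _ _ ha hb y
      simp only [map_add, inner_add_left]
      rw [ha y, hb y]
    · intro c a _ ha y
      rw [map_smul, map_smul, real_inner_smul_left, real_inner_smul_left, ha y]
  -- Hence the norms agree.
  have hnorm : ∀ y, ‖L₁.symm y‖ = ‖L₂.symm y‖ := by
    intro y
    have := hall y y
    rw [real_inner_self_eq_norm_sq, real_inner_self_eq_norm_sq] at this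
    nlinarith [norm_nonneg (L₁.symm y), norm_nonneg (L₂.symm y)]
  ext y
  rw [mem_ellipsoid_iff, mem_ellipsoid_iff, hnorm]

end
end
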